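/- For any 𝐤∈ℕ[Φ]^W, a weight μ∈P is a sink of →_{sym,𝐤} (i.e. there is no ν with μ→_{sym,𝐤}ν) if and only if μ=η_𝐤(λ) for some λ∈P satisfying ⟨λ,α∨⟩≠−1 for all α∈Φ⁺. -/

import Mathlib

open RealInnerProductSpace Pointwise

noncomputable section

variable {V : Type*} [NormedAddCommGroup V] [InnerProductSpace ℝ V]

/-- The coroot `α∨ = 2α/⟨α,α⟩` associated to a vector `α`. -/
def coroot (α : V) : V := (2 / ⟪α, α⟫) • α

/-- The reflection `s_α(v) = v − ⟨v,α∨⟩α` across the hyperplane orthogonal to `α`. -/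
def sRefl (α : V) (v : V) : V := v - ⟪v, coroot α⟫ • α

/-- An irreducible reduced crystallographic root system in the real inner product
space `V`, together with a chosen set of positive roots and simple roots. -/
structure RootSystemData (V : Type*) [NormedAddCommGroup V] [InnerProductSpace ℝ V] where
  n : ℕ
  roots : Set V
  roots_finite : roots.Finite
  roots_nonzero : (0 : V) ∉ roots
  roots_span : Submodule.span ℝ roots = ⊤
  refl_mem : ∀ α ∈ roots, ∀ β ∈ roots, sRefl α β ∈ roots
  reduced : ∀ α ∈ roots, ∀ c : ℝ, c • α ∈ roots → c • α = α ∨ c • α = -α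
  crystallographic : ∀ α ∈ roots, ∀ β ∈ roots, ∃ m : ℤ, ⟪β, coroot α⟫ = (m : ℝ)
  pos : Set V
  pos_subset : pos ⊆ roots
  pos_union : roots = pos ∪ (-pos)
  simple : Fin n → V
  simple_mem : ∀ i, simple i ∈ pos
  simple_li : LinearIndependent ℝ simple
  simple_span : Submodule.span ℝ (Set.range simple) = ⊤
  pos_combo : ∀ α ∈ pos, ∃ c : Fin n → ℕ, α = ∑ i, (c i : ℝ) • simple i
  irred : ∀ S₁ S₂ : Set V, roots = S₁ ∪ S₂ →
    (∀ α ∈ S₁, ∀ β ∈ S₂, ⟪α, β⟫ = 0) → S₁ = ∅ ∨ S₂ = ∅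

namespace RootSystemData

variable (R : RootSystemData V)

/-- The Weyl group `W`: all finite compositions of reflections in roots. -/
def weyl : Set (V → V) :=
  {w | ∃ l : List V, (∀ α ∈ l, α ∈ R.roots) ∧ w = (l.map sRefl).foldr (· ∘ ·) id}

/-- The orbit `W(v)` of a vector under the Weyl group. -/
def orbit (v : V) : Set V := {u | ∃ w ∈ R.weyl, u = w v}

/-- The weight lattice `P`. -/
def weightLattice : Set V :=
  {v | ∀ α ∈ R.roots, ∃ m : ℤ, ⟪v, coroot α⟫ = (m : ℝ)}

/-- The permutohedron `Π(v) = ConvexHull W(v)`. -/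
def perm (v : V) : Set V := convexHull ℝ (R.orbit v)

/-- The discrete permutohedron `Π^Q(λ) = Π(λ) ∩ (Q+λ)`. -/
def permQ (lam : V) : Set V :=
  R.perm lam ∩ {v | v - lam ∈ Submodule.span ℤ R.roots}

/-- Dominance: nonnegative pairing with all simple coroots. -/
def IsDominant (v : V) : Prop := ∀ i, 0 ≤ ⟪v, coroot (R.simple i)⟫

/-- `W`-invariance of a function `𝐤 : Φ → ℕ`. -/
def IsWInvariant (k : V → ℕ) : Prop := ∀ w ∈ R.weyl, ∀ α ∈ R.roots, k (w α) = k α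

/-- Symmetric interval-firing: `λ → λ+α` for `α ∈ Φ⁺` whenever
`⟨λ,α∨⟩+1 ∈ {−𝐤(α),…,𝐤(α)}`. -/
def symFire (k : V → ℕ) (lam mu : V) : Prop :=
  lam ∈ R.weightLattice ∧ ∃ α ∈ R.pos, mu = lam + α ∧
    -(k α : ℝ) ≤ ⟪lam, coroot α⟫ + 1 ∧ ⟪lam, coroot α⟫ + 1 ≤ (k α : ℝ)

/-- Truncated interval-firing: `λ → λ+α` for `α ∈ Φ⁺` whenever
`⟨λ,α∨⟩+1 ∈ {−𝐤(α)+1,…,𝐤(α)}`. -/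
def trFire (k : V → ℕ) (lam mu : V) : Prop :=
  lam ∈ R.weightLattice ∧ ∃ α ∈ R.pos, mu = lam + α ∧
    -(k α : ℝ) + 1 ≤ ⟪lam, coroot α⟫ + 1 ∧ ⟪lam, coroot α⟫ + 1 ≤ (k α : ℝ)

/-- All roots have the same length. -/
def SimplyLaced : Prop := ∀ α ∈ R.roots, ∀ β ∈ R.roots, ‖α‖ = ‖β‖

/-- A root of maximal length. -/
def IsLongRoot (α : V) : Prop := α ∈ R.roots ∧ ∀ β ∈ R.roots, ‖β‖ ≤ ‖α‖

/-- A root which is not of maximal length. -/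
def IsShortRoot (α : V) : Prop := α ∈ R.roots ∧ ¬ R.IsLongRoot α

/-- `𝐤` is good: either `Φ` is simply laced, or `𝐤` vanishing on short roots
implies `𝐤` vanishing on all (in particular long) roots. -/
def IsGood (k : V → ℕ) : Prop :=
  R.SimplyLaced ∨ ((∀ α, R.IsShortRoot α → k α = 0) → ∀ β ∈ R.roots, k β = 0)

/-- The product of the simple reflections indexed by a word. -/
def wordProd (l : List (Fin R.n)) : V → V :=
  (l.map (fun i => sRefl (R.simple i))).foldr (· ∘ ·) id

/-- Coxeter length: the minimal length of a word in the simple reflections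
expressing `w`. -/
def coxLen (w : V → V) : ℕ :=
  sInf {m : ℕ | ∃ l : List (Fin R.n), l.length = m ∧ w = R.wordProd l}

/-- The parabolic subgroup `W_I`: all compositions of simple reflections `s_{αᵢ}`, `i ∈ I`. -/
def weylI (I : Set (Fin R.n)) : Set (V → V) :=
  {w | ∃ l : List (Fin R.n), (∀ i ∈ l, i ∈ I) ∧ w = R.wordProd l}

/-- The orbit `W_I(v)`. -/
def orbitI (I : Set (Fin R.n)) (v : V) : Set V := {u | ∃ w ∈ R.weylI I, u = w v}

/-- The discrete parabolic permutohedron `Π^Q_I(λ)`. -/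
def permQI (I : Set (Fin R.n)) (lam : V) : Set V :=
  convexHull ℝ (R.orbitI I lam) ∩ {v | v - lam ∈ Submodule.span ℤ R.roots}

/-- Given a choice `dm` of dominant representatives, `I^{0,1}_λ` is the set of
indices `i` with `⟨λ_dom, αᵢ∨⟩ ∈ {0,1}`. -/
def I01 (dm : V → V) (lam : V) : Set (Fin R.n) :=
  {i | ⟪dm lam, coroot (R.simple i)⟫ = 0 ∨ ⟪dm lam, coroot (R.simple i)⟫ = 1}

/-- The minimal length of an `α`-traverse in `Π^Q(λ)`. -/
def traverseLen (lam α : V) : ℕ :=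
  sInf {ℓ : ℕ | ∃ mu : V, (∀ i : ℕ, i ≤ ℓ → mu - (i : ℝ) • α ∈ R.permQ lam) ∧
    mu + α ∉ R.permQ lam ∧ mu - ((ℓ : ℝ) + 1) • α ∉ R.permQ lam}

/-- `m_λ(α) = min {cᵢ : αᵢ ∈ W(α)}` where `λ = Σ cᵢ ωᵢ` is dominant,
i.e. `cᵢ = ⟨λ, αᵢ∨⟩`. -/
def mVal (lam α : V) : ℕ :=
  sInf {c : ℕ | ∃ i, R.simple i ∈ R.orbit α ∧ (c : ℝ) = ⟪lam, coroot (R.simple i)⟫}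

/-- Funny weights (only exist when `Φ` is not simply laced). -/
def IsFunny (lam : V) : Prop :=
  ¬ R.SimplyLaced ∧ ∃ l s : Fin R.n, R.IsLongRoot (R.simple l) ∧ R.IsShortRoot (R.simple s) ∧
    ⟪R.simple l, coroot (R.simple s)⟫ ≠ 0 ∧
    ⟪lam, coroot (R.simple s)⟫ = 0 ∧ 1 ≤ ⟪lam, coroot (R.simple l)⟫ ∧
    ∀ i, R.IsLongRoot (R.simple i) → ⟪lam, coroot (R.simple l)⟫ ≤ ⟪lam, coroot (R.simple i)⟫

end RootSystemData

/-- The map `η_𝐤(λ) = λ + w_λ(ρ_𝐤)`, relative to a choice `fw` of fundamental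
weights and a choice `wl` of minimal-length Weyl elements `λ ↦ w_λ`. -/
def etaMap (R : RootSystemData V) (fw : Fin R.n → V) (wl : V → V → V)
    (k : V → ℕ) (lam : V) : V :=
  lam + wl lam (∑ i, (k (R.simple i) : ℝ) • fw i)

/-- Two points are in the same connected component of a relation if they are
related by its reflexive-transitive-symmetric closure. -/
def SameComponent (r : V → V → Prop) (x y : V) : Prop :=
  Relation.ReflTransGen (fun a b => r a b ∨ r b a) x y


section Aux
open Finset

variable {V : Type*} [NormedAddCommGroup V] [InnerProductSpace ℝ V]

lemma coroot_zero : coroot (0 : V) = 0 := by simp [coroot]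

lemma coroot_neg (α : V) : coroot (-α) = - coroot α := by
  simp [coroot, inner_neg_neg]

lemma inner_coroot_smul_left (c : ℝ) (x α : V) :
    ⟪c • x, coroot α⟫ = c * ⟪x, coroot α⟫ := real_inner_smul_left _ _ _

lemma inner_coroot_add_left (x y α : V) :
    ⟪x + y, coroot α⟫ = ⟪x, coroot α⟫ + ⟪y, coroot α⟫ := inner_add_left _ _ _

lemma inner_self_coroot {α : V} (h : α ≠ 0) : ⟪α, coroot α⟫ = 2 := by
  have h2 : ⟪α, α⟫ ≠ 0 := by
    simpa using (inner_self_ne_zero (𝕜 := ℝ)).2 h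
  rw [coroot, real_inner_smul_right]
  field_simp

lemma sRefl_zero_root (v : V) : sRefl (0 : V) v = v := by
  simp [sRefl, coroot_zero]

lemma sRefl_neg_root (α v : V) : sRefl (-α) v = sRefl α v := by
  simp [sRefl, coroot_neg, inner_neg_right]

lemma sRefl_add (α u v : V) : sRefl α (u + v) = sRefl α u + sRefl α v := by
  simp only [sRefl, inner_add_left, add_smul]; abel

lemma sRefl_smul (α : V) (c : ℝ) (v : V) : sRefl α (c • v) = c • sRefl α v := by
  simp [sRefl, real_inner_smul_left, smul_sub, mul_smul]

lemma sRefl_apply_self {α : V} (h : α ≠ 0) : sRefl α α = -α := by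
  rw [sRefl, inner_self_coroot h]; module

lemma sRefl_sRefl (α v : V) : sRefl α (sRefl α v) = v := by
  rcases eq_or_ne α 0 with rfl | h
  · simp [sRefl_zero_root]
  · rw [sRefl, sRefl, inner_sub_left, inner_coroot_smul_left, inner_self_coroot h]
    ring_nf
    module

lemma sRefl_inner (α u v : V) : ⟪sRefl α u, sRefl α v⟫ = ⟪u, v⟫ := by
  rcases eq_or_ne α 0 with rfl | h
  · simp [sRefl_zero_root]
  · have h2 : ⟪α, α⟫ ≠ 0 := by simpa using (inner_self_ne_zero (𝕜 := ℝ)).2 h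
    simp only [sRefl, coroot, real_inner_smul_right, inner_sub_left, inner_sub_right,
      real_inner_smul_left, real_inner_smul_right]
    rw [real_inner_comm α u, real_inner_comm α v]
    field_simp
    ring

end Aux
namespace RootSystemData
open Finset

variable {V : Type*} [NormedAddCommGroup V] [InnerProductSpace ℝ V]
variable (R : RootSystemData V)

/-- The basis of simple roots. -/
noncomputable def bas : Module.Basis (Fin R.n) ℝ V :=
  Module.Basis.mk R.simple_li (by rw [R.simple_span])

lemma bas_apply (i : Fin R.n) : R.bas i = R.simple i := Module.Basis.mk_apply _ _ i

lemma root_ne_zero {β : V} (h : β ∈ R.roots) : β ≠ 0 := fun e => R.roots_nonzero (e ▸ h)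

lemma simple_root (i : Fin R.n) : R.simple i ∈ R.roots := R.pos_subset (R.simple_mem i)

lemma mem_neg_pos {x : V} : x ∈ -R.pos ↔ -x ∈ R.pos := Set.mem_neg

lemma root_cases {β : V} (h : β ∈ R.roots) : β ∈ R.pos ∨ -β ∈ R.pos := by
  rw [R.pos_union] at h
  rcases h with h | h
  · exact Or.inl h
  · exact Or.inr (R.mem_neg_pos.1 h)

lemma neg_root {β : V} (h : β ∈ R.roots) : -β ∈ R.roots := by
  rcases R.root_cases h with h' | h'
  · rw [R.pos_union]; exact Or.inr (R.mem_neg_pos.2 (by simpa using h'))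
  · exact R.pos_subset h'

lemma repr_combo (f : Fin R.n → ℝ) (j : Fin R.n) :
    R.bas.repr (∑ i, f i • R.simple i) j = f j := by
  have : (∑ i, f i • R.simple i) = ∑ i, f i • R.bas i := by
    simp [R.bas_apply]
  rw [this]
  rw [Module.Basis.repr_sum_self]

lemma pos_repr_nonneg {γ : V} (h : γ ∈ R.pos) (j : Fin R.n) : 0 ≤ R.bas.repr γ j := by
  obtain ⟨c, hc⟩ := R.pos_combo γ h
  rw [hc, R.repr_combo]
  positivity

lemma neg_pos_repr_nonpos {γ : V} (h : γ ∈ -R.pos) (j : Fin R.n) : R.bas.repr γ j ≤ 0 := by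
  have := R.pos_repr_nonneg (R.mem_neg_pos.1 h) j
  simp only [map_neg, Finsupp.coe_neg, Pi.neg_apply] at this
  linarith

lemma eq_zero_of_repr_zero {v : V} (h : ∀ j, R.bas.repr v j = 0) : v = 0 := by
  have : R.bas.repr v = 0 := Finsupp.ext h
  simpa using R.bas.repr.map_eq_zero_iff.1 this

lemma root_mem_pos_of_repr_nonneg {β : V} (hβ : β ∈ R.roots)
    (h : ∀ j, 0 ≤ R.bas.repr β j) : β ∈ R.pos := by
  rcases R.root_cases hβ with h' | h'
  · exact h'
  · exfalso
    apply R.root_ne_zero hβ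
    apply R.eq_zero_of_repr_zero
    intro j
    have h2 := R.pos_repr_nonneg h' j
    simp only [map_neg, Finsupp.coe_neg, Pi.neg_apply] at h2
    linarith [h j]

lemma not_pos_neg {β : V} (h1 : β ∈ R.pos) (h2 : -β ∈ R.pos) : False := by
  have hβ : β ∈ R.roots := R.pos_subset h1
  apply R.root_ne_zero hβ
  apply R.eq_zero_of_repr_zero
  intro j
  have ha := R.pos_repr_nonneg h1 j
  have hb := R.pos_repr_nonneg h2 j
  simp only [map_neg, Finsupp.coe_neg, Pi.neg_apply] at hb
  linarith

lemma pos_or_negpos_exclusive {β : V} (hβ : β ∈ R.roots) :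
    (β ∈ R.pos ∧ ¬(β ∈ -R.pos)) ∨ (β ∈ -R.pos ∧ ¬(β ∈ R.pos)) := by
  rcases R.root_cases hβ with h | h
  · exact Or.inl ⟨h, fun h' => R.not_pos_neg h (R.mem_neg_pos.1 h')⟩
  · exact Or.inr ⟨R.mem_neg_pos.2 h, fun h' => R.not_pos_neg h' h⟩

end RootSystemData
namespace RootSystemData
open Finset

variable {V : Type*} [NormedAddCommGroup V] [InnerProductSpace ℝ V]
variable (R : RootSystemData V)

/-- Product of reflections along a list of vectors. -/
def listProd (l : List V) : V → V := (l.map sRefl).foldr (· ∘ ·) id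

lemma listProd_nil : listProd ([] : List V) = id := rfl

lemma listProd_cons (a : V) (l : List V) :
    listProd (a :: l) = sRefl a ∘ listProd l := rfl

lemma listProd_append (l₁ l₂ : List V) (x : V) :
    listProd (l₁ ++ l₂) x = listProd l₁ (listProd l₂ x) := by
  induction l₁ with
  | nil => rfl
  | cons a t ih => simp [listProd_cons, ih]

lemma mem_weyl_iff {w : V → V} :
    w ∈ R.weyl ↔ ∃ l : List V, (∀ α ∈ l, α ∈ R.roots) ∧ w = listProd l := Iff.rfl

lemma id_mem_weyl : (id : V → V) ∈ R.weyl := ⟨[], by simp, rfl⟩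

lemma sRefl_mem_weyl {β : V} (h : β ∈ R.roots) : sRefl β ∈ R.weyl :=
  ⟨[β], by simpa using h, rfl⟩

lemma comp_mem_weyl {w w' : V → V} (h : w ∈ R.weyl) (h' : w' ∈ R.weyl) :
    w ∘ w' ∈ R.weyl := by
  obtain ⟨l, hl, rfl⟩ := h
  obtain ⟨l', hl', rfl⟩ := h'
  refine ⟨l ++ l', ?_, ?_⟩
  · intro α hα
    rcases List.mem_append.1 hα with h | h
    · exact hl _ h
    · exact hl' _ h
  · funext x; exact (listProd_append l l' x).symm

lemma listProd_inv (l : List V) :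
    (∀ x, listProd l (listProd l.reverse x) = x) ∧
    (∀ x, listProd l.reverse (listProd l x) = x) := by
  induction l with
  | nil => exact ⟨fun x => rfl, fun x => rfl⟩
  | cons a t ih =>
    constructor
    · intro x
      have : (a :: t).reverse = t.reverse ++ [a] := by simp
      rw [this, listProd_cons, listProd_append]
      simp only [Function.comp_apply]
      rw [ih.1]
      exact sRefl_sRefl a x
    · intro x
      have : (a :: t).reverse = t.reverse ++ [a] := by simp
      rw [this, listProd_cons, listProd_append]
      simp only [Function.comp_apply]
      simp only [listProd_cons, listProd_nil, Function.comp_apply, id_eq]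
      rw [sRefl_sRefl, ih.2]

lemma weyl_inv {w : V → V} (h : w ∈ R.weyl) :
    ∃ w' ∈ R.weyl, (∀ x, w (w' x) = x) ∧ (∀ x, w' (w x) = x) := by
  obtain ⟨l, hl, rfl⟩ := h
  refine ⟨listProd l.reverse, ⟨l.reverse, fun α hα => hl _ (List.mem_reverse.1 hα), rfl⟩,
    (listProd_inv l).1, (listProd_inv l).2⟩

/-- Key properties of Weyl group elements. -/
def IsOrtho (w : V → V) : Prop :=
  (∀ u v, w (u + v) = w u + w v) ∧ (∀ (c : ℝ) v, w (c • v) = c • w v) ∧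
  (∀ u v, ⟪w u, w v⟫ = ⟪u, v⟫) ∧ (∀ β ∈ R.roots, w β ∈ R.roots)

lemma isOrtho_sRefl {α : V} (h : α ∈ R.roots) : R.IsOrtho (sRefl α) :=
  ⟨sRefl_add α, sRefl_smul α, sRefl_inner α, fun β hβ => R.refl_mem α h β hβ⟩

lemma isOrtho_weyl {w : V → V} (h : w ∈ R.weyl) : R.IsOrtho w := by
  obtain ⟨l, hl, rfl⟩ := h
  induction l with
  | nil => exact ⟨fun _ _ => rfl, fun _ _ => rfl, fun _ _ => rfl, fun β hβ => hβ⟩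
  | cons a t ih =>
    have ha : a ∈ R.roots := hl a (by simp)
    obtain ⟨t1, t2, t3, t4⟩ : R.IsOrtho (listProd t) := ih (fun α hα => hl α (by simp [hα]))
    obtain ⟨s1, s2, s3, s4⟩ := R.isOrtho_sRefl ha
    show R.IsOrtho (sRefl a ∘ listProd t)
    exact ⟨fun u v => by simp [t1, s1], fun c v => by simp [t2, s2],
      fun u v => by simp [t3, s3], fun β hβ => s4 _ (t4 β hβ)⟩

lemma IsOrtho.map_zero {w : V → V} (h : R.IsOrtho w) : w 0 = 0 := by
  have := h.2.1 0 0
  simpa using this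

lemma IsOrtho.map_neg {w : V → V} (h : R.IsOrtho w) (x : V) : w (-x) = - w x := by
  have := h.2.1 (-1) x
  simpa using this

lemma IsOrtho.map_sub {w : V → V} (h : R.IsOrtho w) (x y : V) : w (x - y) = w x - w y := by
  rw [sub_eq_add_neg, h.1, h.map_neg R]; abel

lemma IsOrtho.map_sum {w : V → V} (h : R.IsOrtho w) {ι : Type*} (s : Finset ι)
    (f : ι → ℝ) (g : ι → V) : w (∑ i ∈ s, f i • g i) = ∑ i ∈ s, f i • w (g i) := by
  classical
  induction s using Finset.induction with
  | empty => simpa using h.map_zero R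
  | insert _ _ hni ih =>
    rw [Finset.sum_insert hni, h.1, h.2.1, ih, Finset.sum_insert hni]

lemma IsOrtho.coroot_map {w : V → V} (h : R.IsOrtho w) (α : V) :
    coroot (w α) = w (coroot α) := by
  rw [coroot, coroot, h.2.1, h.2.2.1]

lemma IsOrtho.inner_coroot_map {w : V → V} (h : R.IsOrtho w) (u v : V) :
    ⟪w u, coroot (w v)⟫ = ⟪u, coroot v⟫ := by
  rw [h.coroot_map R, h.2.2.1]

lemma IsOrtho.conj_sRefl {w w' : V → V} (h : R.IsOrtho w)
    (hww' : ∀ x, w (w' x) = x) (hw'w : ∀ x, w' (w x) = x) (β x : V) :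
    w (sRefl β (w' x)) = sRefl (w β) x := by
  rw [sRefl, sRefl, h.map_sub R, h.2.1, hww']
  congr 2
  rw [← h.inner_coroot_map R (w' x) β, hww']

end RootSystemData
section IntHelpers

lemma one_le_of_int_pos {x : ℝ} (h : ∃ m : ℤ, x = m) (h0 : 0 < x) : 1 ≤ x := by
  obtain ⟨m, rfl⟩ := h
  exact_mod_cast Int.cast_le.2 (by exact_mod_cast h0 : (0:ℤ) < m)

lemma two_le_of_int {x : ℝ} (h : ∃ m : ℤ, x = m) (h0 : 0 ≤ x) (h1 : x ≠ 0) (h2 : x ≠ 1) :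
    2 ≤ x := by
  obtain ⟨m, rfl⟩ := h
  have : (0:ℤ) ≤ m := by exact_mod_cast h0
  have : m ≠ 0 := by exact_mod_cast h1
  have : m ≠ 1 := by exact_mod_cast h2
  have : (2:ℤ) ≤ m := by omega
  exact_mod_cast this

end IntHelpers

namespace RootSystemData
open Finset

variable {V : Type*} [NormedAddCommGroup V] [InnerProductSpace ℝ V]
variable (R : RootSystemData V)

lemma inner_self_pos' {x : V} (h : x ≠ 0) : 0 < ⟪x, x⟫ :=
  lt_of_le_of_ne real_inner_self_nonneg
    (fun he => h (real_inner_self_nonpos.1 (le_of_eq he.symm)))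

lemma pairing_int {α β : V} (hα : α ∈ R.roots) (hβ : β ∈ R.roots) :
    ∃ m : ℤ, ⟪β, coroot α⟫ = (m : ℝ) := R.crystallographic α hα β hβ

lemma inner_coroot_eq' (x α : V) : ⟪x, coroot α⟫ = (2 / ⟪α, α⟫) * ⟪x, α⟫ :=
  real_inner_smul_right _ _ _

lemma repr_simple (i j : Fin R.n) :
    R.bas.repr (R.simple i) j = if i = j then 1 else 0 := by
  rw [← R.bas_apply, R.bas.repr_self]
  simp [Finsupp.single_apply]

lemma repr_sum_smul {ι : Type*} (s : Finset ι) (f : ι → ℝ) (g : ι → V) (j : Fin R.n) :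
    R.bas.repr (∑ i ∈ s, f i • g i) j = ∑ i ∈ s, f i * R.bas.repr (g i) j := by
  classical
  induction s using Finset.induction with
  | empty => simp
  | insert _ _ hni ih => simp [Finset.sum_insert hni, ih]

lemma sRefl_simple_mem_pos {γ : V} (hγ : γ ∈ R.pos) (i : Fin R.n)
    (hne : γ ≠ R.simple i) : sRefl (R.simple i) γ ∈ R.pos := by
  have hγr : γ ∈ R.roots := R.pos_subset hγ
  have hsr : sRefl (R.simple i) γ ∈ R.roots := R.refl_mem _ (R.simple_root i) _ hγr
  set m : ℝ := ⟪γ, coroot (R.simple i)⟫ with hm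
  have hrepr : ∀ j, j ≠ i → R.bas.repr (sRefl (R.simple i) γ) j = R.bas.repr γ j := by
    intro j hj
    show R.bas.repr (γ - m • R.simple i) j = _
    rw [map_sub, map_smul]
    simp [R.repr_simple, (Ne.symm hj : ¬ i = j)]
  by_cases hex : ∃ j, j ≠ i ∧ R.bas.repr γ j ≠ 0
  · obtain ⟨j, hj, hjne⟩ := hex
    have hjpos : 0 < R.bas.repr γ j := lt_of_le_of_ne (R.pos_repr_nonneg hγ j) (Ne.symm hjne)
    rcases R.root_cases hsr with h | h
    · exact h
    · exfalso
      have := R.pos_repr_nonneg h j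
      simp only [map_neg, Finsupp.coe_neg, Pi.neg_apply] at this
      rw [hrepr j hj] at this
      linarith
  · push_neg at hex
    exfalso
    have hgi : γ = R.bas.repr γ i • R.simple i := by
      conv_lhs => rw [← R.bas.sum_repr γ]
      rw [Finset.sum_eq_single i]
      · rw [R.bas_apply]
      · intro j _ hj
        rw [hex j hj, zero_smul]
      · simp
    rcases R.reduced (R.simple i) (R.simple_root i) (R.bas.repr γ i) (hgi ▸ hγr) with h | h
    · exact hne (hgi.trans h)
    · refine R.not_pos_neg hγ ?_
      rw [hgi, h, neg_neg]
      exact R.simple_mem i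

lemma exists_pos_pairing {γ : V} (hγ : γ ∈ R.pos) :
    ∃ i, 1 ≤ ⟪γ, coroot (R.simple i)⟫ := by
  have hγr : γ ∈ R.roots := R.pos_subset hγ
  obtain ⟨c, hc⟩ := R.pos_combo γ hγ
  have hpos : 0 < ⟪γ, γ⟫ := inner_self_pos' (R.root_ne_zero hγr)
  have hsum : ⟪γ, γ⟫ = ∑ i, (c i : ℝ) * ⟪γ, R.simple i⟫ := by
    nth_rewrite 2 [hc]
    rw [inner_sum]
    simp [real_inner_smul_right]
  have : ∃ i, 0 < (c i : ℝ) * ⟪γ, R.simple i⟫ := by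
    by_contra hcon
    push_neg at hcon
    have : ⟪γ, γ⟫ ≤ 0 := hsum ▸ Finset.sum_nonpos (fun i _ => hcon i)
    linarith
  obtain ⟨i, hi⟩ := this
  have h1 : 0 < ⟪γ, R.simple i⟫ := by
    rcases lt_trichotomy (⟪γ, R.simple i⟫) 0 with h | h | h
    · nlinarith [Nat.cast_nonneg (α := ℝ) (c i)]
    · rw [h] at hi; simp at hi
    · exact h
  have h2 : 0 < ⟪γ, coroot (R.simple i)⟫ := by
    rw [inner_coroot_eq']
    have : 0 < ⟪R.simple i, R.simple i⟫ := inner_self_pos' (R.root_ne_zero (R.simple_root i))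
    positivity
  exact ⟨i, one_le_of_int_pos (R.pairing_int (R.simple_root i) hγr) h2⟩

/-- Real-valued height. -/
def htR (v : V) : ℝ := ∑ j, R.bas.repr v j

lemma htR_pos {γ : V} (hγ : γ ∈ R.pos) : 0 < R.htR γ := by
  rcases (lt_or_eq_of_le (Finset.sum_nonneg (fun j _ => R.pos_repr_nonneg hγ j))) with h | h
  · exact h
  · exfalso
    apply R.root_ne_zero (R.pos_subset hγ)
    apply R.eq_zero_of_repr_zero
    intro j
    exact (Finset.sum_eq_zero_iff_of_nonneg (fun j _ => R.pos_repr_nonneg hγ j)).1 h.symm j (by simp)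

lemma htR_simple (i : Fin R.n) : R.htR (R.simple i) = 1 := by
  unfold htR
  rw [Finset.sum_eq_single i] <;> simp [R.repr_simple]
  intro j hj
  simp [R.repr_simple, Ne.symm hj]

lemma htR_sRefl_simple (γ : V) (i : Fin R.n) :
    R.htR (sRefl (R.simple i) γ) = R.htR γ - ⟪γ, coroot (R.simple i)⟫ := by
  show R.htR (γ - ⟪γ, coroot (R.simple i)⟫ • R.simple i) = _
  unfold htR
  simp only [map_sub, map_smul, Finsupp.coe_sub, Finsupp.coe_smul, Pi.sub_apply,
    Pi.smul_apply, smul_eq_mul]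
  rw [Finset.sum_sub_distrib, ← Finset.mul_sum]
  have : ∑ j, R.bas.repr (R.simple i) j = 1 := R.htR_simple i
  rw [this, mul_one]

/-- Induction principle on positive roots via simple reflections. -/
lemma pos_induction (Q : V → Prop)
    (base : ∀ i, Q (R.simple i))
    (step : ∀ γ ∈ R.pos, ∀ i, 1 ≤ ⟪γ, coroot (R.simple i)⟫ → γ ≠ R.simple i →
      sRefl (R.simple i) γ ∈ R.pos → Q (sRefl (R.simple i) γ) → Q γ) :
    ∀ γ ∈ R.pos, Q γ := by
  have key : ∀ N : ℕ, ∀ γ ∈ R.pos, R.htR γ ≤ N → Q γ := by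
    intro N
    induction N with
    | zero => intro γ hγ hle; exact absurd hle (not_le.2 (by simpa using R.htR_pos hγ))
    | succ N ih =>
      intro γ hγ hle
      by_cases hs : ∃ i, γ = R.simple i
      · obtain ⟨i, rfl⟩ := hs; exact base i
      · push_neg at hs
        obtain ⟨i, hi⟩ := R.exists_pos_pairing hγ
        have hne := hs i
        have hmem := R.sRefl_simple_mem_pos hγ i hne
        have hht : R.htR (sRefl (R.simple i) γ) ≤ N := by
          rw [R.htR_sRefl_simple]
          push_cast at hle ⊢
          linarith
        exact step γ hγ i hi hne hmem (ih _ hmem hht)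
  intro γ hγ
  exact key ⌈R.htR γ⌉₊ γ hγ (Nat.le_ceil _)

lemma cone_pos {w : V → V} (hw : R.IsOrtho w) (hs : ∀ i, w (R.simple i) ∈ R.pos)
    {γ : V} (hγ : γ ∈ R.pos) : w γ ∈ R.pos := by
  obtain ⟨c, hc⟩ := R.pos_combo γ hγ
  have hwγ : w γ = ∑ i, (c i : ℝ) • w (R.simple i) := by
    rw [hc]; exact hw.map_sum R _ _ _
  apply R.root_mem_pos_of_repr_nonneg (hw.2.2.2 _ (R.pos_subset hγ))
  intro j
  rw [hwγ, R.repr_sum_smul]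
  exact Finset.sum_nonneg fun i _ => mul_nonneg (by positivity) (R.pos_repr_nonneg (hs i) j)

lemma exists_simple_neg {w : V → V} (hw : R.IsOrtho w) {γ : V} (hγ : γ ∈ R.pos)
    (hneg : w γ ∈ -R.pos) : ∃ j, w (R.simple j) ∈ -R.pos := by
  by_contra hcon
  push_neg at hcon
  have hs : ∀ i, w (R.simple i) ∈ R.pos := by
    intro i
    rcases R.root_cases (hw.2.2.2 _ (R.simple_root i)) with h | h
    · exact h
    · exact absurd (R.mem_neg_pos.2 h) (hcon i)
  exact R.not_pos_neg (R.cone_pos hw hs hγ) (R.mem_neg_pos.1 hneg)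

lemma neg_of_pos_add {a b : V} {c : ℝ} (ha : a ∈ R.pos) (hb : b ∈ R.roots) (hc : 0 < c)
    (h : a + c • b ∈ -R.pos) : b ∈ -R.pos := by
  rcases R.root_cases hb with hbp | hbp
  · exfalso
    have hz : ∀ j, R.bas.repr (a + c • b) j = 0 := by
      intro j
      refine le_antisymm (R.neg_pos_repr_nonpos h j) ?_
      rw [map_add, map_smul]
      have := R.pos_repr_nonneg ha j
      have := R.pos_repr_nonneg hbp j
      simp only [Finsupp.coe_add, Finsupp.coe_smul, Pi.add_apply, Pi.smul_apply, smul_eq_mul]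
      nlinarith
    have h0 : a + c • b = 0 := R.eq_zero_of_repr_zero hz
    have : (0 : V) ∈ R.pos := by
      have h1 := R.mem_neg_pos.1 h
      rwa [h0, neg_zero] at h1
    exact R.roots_nonzero (R.pos_subset this)
  · exact R.mem_neg_pos.2 (by simpa using hbp)
end RootSystemData
namespace RootSystemData
open Finset

variable {V : Type*} [NormedAddCommGroup V] [InnerProductSpace ℝ V]
variable (R : RootSystemData V)

lemma wordProd_nil : R.wordProd [] = id := rfl

lemma wordProd_cons (i : Fin R.n) (l : List (Fin R.n)) :
    R.wordProd (i :: l) = sRefl (R.simple i) ∘ R.wordProd l := rfl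

lemma wordProd_singleton (j : Fin R.n) : R.wordProd [j] = sRefl (R.simple j) :=
  funext fun _ => rfl

lemma wordProd_append (l₁ l₂ : List (Fin R.n)) :
    R.wordProd (l₁ ++ l₂) = R.wordProd l₁ ∘ R.wordProd l₂ := by
  induction l₁ with
  | nil => rfl
  | cons a t ih => rw [List.cons_append, wordProd_cons, wordProd_cons, ih]; rfl

lemma wordProd_mem_weyl (l : List (Fin R.n)) : R.wordProd l ∈ R.weyl := by
  induction l with
  | nil => exact R.id_mem_weyl
  | cons a t ih =>
    rw [wordProd_cons]
    exact R.comp_mem_weyl (R.sRefl_mem_weyl (R.simple_root a)) ih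

lemma weylI_subset_weyl (I : Set (Fin R.n)) : R.weylI I ⊆ R.weyl := by
  rintro w ⟨l, _, rfl⟩
  exact R.wordProd_mem_weyl l

lemma coxLen_le {w : V → V} (l : List (Fin R.n)) (h : w = R.wordProd l) :
    R.coxLen w ≤ l.length := Nat.sInf_le ⟨l, rfl, h⟩

lemma sRefl_pos_word {β : V} (hβ : β ∈ R.pos) : ∃ l, sRefl β = R.wordProd l := by
  refine R.pos_induction (fun γ => ∃ l, sRefl γ = R.wordProd l) ?_ ?_ β hβ
  · intro i
    exact ⟨[i], by funext x; rfl⟩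
  · intro γ hγ i _ _ hmem ⟨l, hl⟩
    refine ⟨[i] ++ l ++ [i], ?_⟩
    rw [wordProd_append, wordProd_append, ← hl]
    have hso := R.isOrtho_sRefl (R.simple_root i)
    funext x
    have := hso.conj_sRefl R (sRefl_sRefl (R.simple i)) (sRefl_sRefl (R.simple i))
      (sRefl (R.simple i) γ) x
    rw [sRefl_sRefl] at this
    simp only [Function.comp_apply]
    rw [← this]
    rfl

lemma sRefl_root_word {β : V} (hβ : β ∈ R.roots) : ∃ l, sRefl β = R.wordProd l := by
  rcases R.root_cases hβ with h | h
  · exact R.sRefl_pos_word h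
  · obtain ⟨l, hl⟩ := R.sRefl_pos_word h
    exact ⟨l, by rw [← hl]; funext x; exact (sRefl_neg_root β x).symm⟩

lemma weyl_word {w : V → V} (h : w ∈ R.weyl) : ∃ l, w = R.wordProd l := by
  obtain ⟨l, hl, rfl⟩ := h
  induction l with
  | nil => exact ⟨[], rfl⟩
  | cons a t ih =>
    obtain ⟨l₁, hl₁⟩ := ih (fun α hα => hl α (by simp [hα]))
    obtain ⟨l₂, hl₂⟩ := R.sRefl_root_word (hl a (by simp))
    refine ⟨l₂ ++ l₁, ?_⟩
    rw [wordProd_append, ← hl₁, ← hl₂]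
    rfl

lemma coxLen_spec {w : V → V} (h : w ∈ R.weyl) :
    ∃ l : List (Fin R.n), l.length = R.coxLen w ∧ w = R.wordProd l := by
  have hne : {m : ℕ | ∃ l : List (Fin R.n), l.length = m ∧ w = R.wordProd l}.Nonempty := by
    obtain ⟨l, hl⟩ := R.weyl_word h
    exact ⟨l.length, l, rfl, hl⟩
  exact Nat.sInf_mem hne

lemma eq_id_of_coxLen_zero {w : V → V} (h : w ∈ R.weyl) (h0 : R.coxLen w = 0) : w = id := by
  obtain ⟨l, hlen, hw⟩ := R.coxLen_spec h
  rw [h0, List.length_eq_zero_iff] at hlen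
  rw [hw, hlen, wordProd_nil]

lemma coxLen_id : R.coxLen (id : V → V) = 0 :=
  Nat.le_zero.1 (by simpa [wordProd_nil] using R.coxLen_le [] rfl)

lemma exchange (l : List (Fin R.n)) (j : Fin R.n)
    (h : R.wordProd l (R.simple j) ∈ -R.pos) :
    ∃ l', l'.length + 1 = l.length ∧
      R.wordProd l ∘ sRefl (R.simple j) = R.wordProd l' := by
  induction l with
  | nil =>
    exfalso
    exact R.not_pos_neg (R.simple_mem j) (R.mem_neg_pos.1 (by simpa [wordProd_nil] using h))
  | cons i t ih =>
    have hur : R.wordProd t (R.simple j) ∈ R.roots :=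
      (R.isOrtho_weyl (R.wordProd_mem_weyl t)).2.2.2 _ (R.simple_root j)
    rcases R.root_cases hur with hp | hp
    · -- wordProd t (simple j) positive, so it must equal simple i
      have huj : R.wordProd t (R.simple j) = R.simple i := by
        by_contra hne
        have := R.sRefl_simple_mem_pos hp i hne
        rw [wordProd_cons] at h
        exact R.not_pos_neg this (R.mem_neg_pos.1 h)
      obtain ⟨u', hu'w, huu', hu'u⟩ := R.weyl_inv (R.wordProd_mem_weyl t)
      have hou := R.isOrtho_weyl (R.wordProd_mem_weyl t)
      refine ⟨t, by simp, ?_⟩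
      funext x
      have hconj := hou.conj_sRefl R huu' hu'u (R.simple j) (R.wordProd t x)
      rw [hu'u, huj] at hconj
      -- hconj : wordProd t (sRefl (simple j) x) = sRefl (simple i) (wordProd t x)
      simp only [wordProd_cons, Function.comp_apply]
      rw [hconj, sRefl_sRefl]
    · -- u (simple j) negative: use induction
      obtain ⟨t', hlen, heq⟩ := ih (R.mem_neg_pos.2 (R.mem_neg_pos.1 hp))
      refine ⟨i :: t', by simp [← hlen], ?_⟩
      rw [wordProd_cons, wordProd_cons, Function.comp_assoc, heq]

lemma descent {w : V → V} (h : w ∈ R.weyl) {j : Fin R.n}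
    (hneg : w (R.simple j) ∈ -R.pos) :
    R.coxLen (w ∘ sRefl (R.simple j)) + 1 ≤ R.coxLen w := by
  obtain ⟨l, hlen, hw⟩ := R.coxLen_spec h
  obtain ⟨l', hl', heq⟩ := R.exchange l j (by rw [← hw]; exact hneg)
  have := R.coxLen_le (w := w ∘ sRefl (R.simple j)) l' (by rw [hw]; exact heq)
  omega

lemma ascent {w : V → V} (h : w ∈ R.weyl) (j : Fin R.n) :
    R.coxLen w ≤ R.coxLen (w ∘ sRefl (R.simple j)) + 1 := by
  have hws : w ∘ sRefl (R.simple j) ∈ R.weyl :=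
    R.comp_mem_weyl h (R.sRefl_mem_weyl (R.simple_root j))
  obtain ⟨l, hlen, hw⟩ := R.coxLen_spec hws
  have : w = R.wordProd (l ++ [j]) := by
    rw [wordProd_append, wordProd_singleton]
    funext x
    calc w x = (w ∘ sRefl (R.simple j)) (sRefl (R.simple j) x) := by
          simp only [Function.comp_apply, sRefl_sRefl]
      _ = R.wordProd l (sRefl (R.simple j) x) := congrFun hw _
      _ = (R.wordProd l ∘ sRefl (R.simple j)) x := rfl
  have := R.coxLen_le _ this
  simp only [List.length_append, List.length_singleton] at this
  omega

lemma eq_id_of_pos_stable {w : V → V} (h : w ∈ R.weyl)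
    (hpos : ∀ γ ∈ R.pos, w γ ∈ R.pos) : w = id := by
  obtain ⟨l, hlen, hw⟩ := R.coxLen_spec h
  rcases List.eq_nil_or_concat l with rfl | ⟨t, j, rfl⟩
  · rw [hw, wordProd_nil]
  · exfalso
    rw [List.concat_eq_append] at hw hlen
    have h1 : R.wordProd t (R.simple j) ∈ -R.pos := by
      have heq1 : w (R.simple j) = - R.wordProd t (R.simple j) := by
        rw [hw, wordProd_append, Function.comp_apply, wordProd_singleton,
          sRefl_apply_self (R.root_ne_zero (R.simple_root j))]
        exact (R.isOrtho_weyl (R.wordProd_mem_weyl t)).map_neg R _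
      apply R.mem_neg_pos.2
      rw [← heq1]
      exact hpos _ (R.simple_mem j)
    obtain ⟨l', hl', heq⟩ := R.exchange t j h1
    have hwl' : w = R.wordProd l' := by
      rw [← heq, hw, wordProd_append, wordProd_singleton]
    have := R.coxLen_le l' hwl'
    simp only [List.length_append, List.length_singleton] at hlen
    omega
end RootSystemData
namespace RootSystemData
open Finset
open scoped Classical

variable {V : Type*} [NormedAddCommGroup V] [InnerProductSpace ℝ V]
variable (R : RootSystemData V)

/-- The finset of positive roots. -/
noncomputable def posFinset : Finset V := (R.roots_finite.subset R.pos_subset).toFinset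

lemma mem_posFinset {γ : V} : γ ∈ R.posFinset ↔ γ ∈ R.pos := Set.Finite.mem_toFinset _

/-- The inversion set of `w`. -/
noncomputable def invFinset (w : V → V) : Finset V :=
  R.posFinset.filter (fun γ => w γ ∈ -R.pos)

lemma mem_invFinset {w : V → V} {γ : V} :
    γ ∈ R.invFinset w ↔ γ ∈ R.pos ∧ w γ ∈ -R.pos := by
  simp [invFinset, R.mem_posFinset]

/-- The number of inversions of `w`. -/
noncomputable def ninv (w : V → V) : ℕ := (R.invFinset w).card

lemma sRefl_simple_ne {γ : V} (hγ : γ ∈ R.pos) (i : Fin R.n) (hne : γ ≠ R.simple i) :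
    sRefl (R.simple i) γ ≠ R.simple i := by
  intro he
  have h2 := congrArg (sRefl (R.simple i)) he
  rw [sRefl_sRefl, sRefl_apply_self (R.root_ne_zero (R.simple_root i))] at h2
  exact R.not_pos_neg (R.simple_mem i) (by rw [← h2]; exact hγ)

lemma card_erase_invFinset (w : V → V) (i : Fin R.n) :
    ((R.invFinset (w ∘ sRefl (R.simple i))).erase (R.simple i)).card
      = ((R.invFinset w).erase (R.simple i)).card := by
  apply Finset.card_bij' (fun γ _ => sRefl (R.simple i) γ) (fun γ _ => sRefl (R.simple i) γ)
  · intro γ hγ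
    rw [Finset.mem_erase, R.mem_invFinset] at hγ
    obtain ⟨hne, hγp, hγn⟩ := hγ
    rw [Finset.mem_erase, R.mem_invFinset]
    exact ⟨R.sRefl_simple_ne hγp i hne, R.sRefl_simple_mem_pos hγp i hne,
      by simpa [Function.comp_apply] using hγn⟩
  · intro γ hγ
    rw [Finset.mem_erase, R.mem_invFinset] at hγ
    obtain ⟨hne, hγp, hγn⟩ := hγ
    rw [Finset.mem_erase, R.mem_invFinset]
    refine ⟨R.sRefl_simple_ne hγp i hne, R.sRefl_simple_mem_pos hγp i hne, ?_⟩
    show w (sRefl (R.simple i) (sRefl (R.simple i) γ)) ∈ -R.pos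
    rwa [sRefl_sRefl]
  · intro γ _; exact sRefl_sRefl _ _
  · intro γ _; exact sRefl_sRefl _ _

lemma comp_sRefl_simple_apply {w : V → V} (hw : R.IsOrtho w) (i : Fin R.n) :
    (w ∘ sRefl (R.simple i)) (R.simple i) = - w (R.simple i) := by
  rw [Function.comp_apply, sRefl_apply_self (R.root_ne_zero (R.simple_root i)), hw.map_neg R]

lemma ninv_descent {w : V → V} (hw : R.IsOrtho w) {i : Fin R.n}
    (h : w (R.simple i) ∈ -R.pos) : R.ninv (w ∘ sRefl (R.simple i)) + 1 = R.ninv w := by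
  have hAi : R.simple i ∉ R.invFinset (w ∘ sRefl (R.simple i)) := by
    rw [R.mem_invFinset]
    rintro ⟨-, hmem⟩
    rw [R.comp_sRefl_simple_apply hw] at hmem
    have hp : w (R.simple i) ∈ R.pos := by simpa using hmem
    exact R.not_pos_neg hp (R.mem_neg_pos.1 h)
  have hBi : R.simple i ∈ R.invFinset w := R.mem_invFinset.2 ⟨R.simple_mem i, h⟩
  have h1 : ((R.invFinset (w ∘ sRefl (R.simple i))).erase (R.simple i)).card
      = R.ninv (w ∘ sRefl (R.simple i)) := by
    rw [Finset.erase_eq_of_notMem hAi]; rfl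
  have h2 := Finset.card_erase_of_mem hBi
  have h3 := R.card_erase_invFinset w i
  have h4 : 1 ≤ R.ninv w := Finset.card_pos.2 ⟨_, hBi⟩
  unfold ninv at *
  omega

lemma ninv_ascent {w : V → V} (hw : R.IsOrtho w) {i : Fin R.n}
    (h : w (R.simple i) ∈ R.pos) : R.ninv (w ∘ sRefl (R.simple i)) = R.ninv w + 1 := by
  have hAi : R.simple i ∈ R.invFinset (w ∘ sRefl (R.simple i)) := by
    rw [R.mem_invFinset]
    refine ⟨R.simple_mem i, ?_⟩
    rw [R.comp_sRefl_simple_apply hw]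
    exact R.mem_neg_pos.2 (by simpa using h)
  have hBi : R.simple i ∉ R.invFinset w := by
    rw [R.mem_invFinset]
    rintro ⟨-, hmem⟩
    exact R.not_pos_neg h (R.mem_neg_pos.1 hmem)
  have h1 := Finset.card_erase_of_mem hAi
  have h2 : ((R.invFinset w).erase (R.simple i)).card = R.ninv w := by
    rw [Finset.erase_eq_of_notMem hBi]; rfl
  have h3 := R.card_erase_invFinset w i
  have h4 : 1 ≤ (R.invFinset (w ∘ sRefl (R.simple i))).card := Finset.card_pos.2 ⟨_, hAi⟩
  unfold ninv at *
  omega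

lemma invFinset_id : R.invFinset (id : V → V) = ∅ := by
  ext γ
  rw [R.mem_invFinset]
  simp only [Finset.notMem_empty, iff_false]
  rintro ⟨hp, hn⟩
  exact R.not_pos_neg hp (R.mem_neg_pos.1 hn)

lemma eq_id_of_ninv_zero {w : V → V} (hw : w ∈ R.weyl) (h : R.ninv w = 0) : w = id := by
  apply R.eq_id_of_pos_stable hw
  intro γ hγ
  have hempty : R.invFinset w = ∅ := Finset.card_eq_zero.1 h
  have : γ ∉ R.invFinset w := by rw [hempty]; simp
  rw [R.mem_invFinset] at this
  rcases R.root_cases ((R.isOrtho_weyl hw).2.2.2 _ (R.pos_subset hγ)) with h' | h'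
  · exact h'
  · exact absurd ⟨hγ, R.mem_neg_pos.2 h'⟩ this

lemma ninv_wordProd_le (l : List (Fin R.n)) : R.ninv (R.wordProd l) ≤ l.length := by
  induction l using List.reverseRecOn with
  | nil =>
    show R.ninv id ≤ 0
    unfold ninv
    rw [R.invFinset_id]
    simp
  | append_singleton l j ih =>
    rw [wordProd_append, wordProd_singleton]
    have hwo := R.isOrtho_weyl (R.wordProd_mem_weyl l)
    rcases R.root_cases (hwo.2.2.2 _ (R.simple_root j)) with h | h
    · have := R.ninv_ascent hwo h
      simp only [List.length_append, List.length_singleton]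
      omega
    · have := R.ninv_descent hwo (R.mem_neg_pos.2 (R.mem_neg_pos.1 h))
      simp only [List.length_append, List.length_singleton]
      omega

lemma coxLen_eq_ninv {w : V → V} (hw : w ∈ R.weyl) : R.coxLen w = R.ninv w := by
  have hle : R.ninv w ≤ R.coxLen w := by
    obtain ⟨l, hlen, rfl⟩ := R.coxLen_spec hw
    rw [← hlen]
    exact R.ninv_wordProd_le l
  have hge : ∀ N : ℕ, ∀ w ∈ R.weyl, R.ninv w ≤ N → R.coxLen w ≤ R.ninv w := by
    intro N
    induction N with
    | zero =>
      intro w hw h0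
      have := R.eq_id_of_ninv_zero hw (Nat.le_zero.1 h0)
      subst this
      rw [R.coxLen_id]
      exact Nat.zero_le _
    | succ N ih =>
      intro w hw hN
      by_cases h0 : R.ninv w = 0
      · have := R.eq_id_of_ninv_zero hw h0
        subst this
        rw [R.coxLen_id]
        exact Nat.zero_le _
      · obtain ⟨γ, hγ⟩ := Finset.card_pos.1 (Nat.pos_of_ne_zero h0)
        rw [R.mem_invFinset] at hγ
        obtain ⟨j, hj⟩ := R.exists_simple_neg (R.isOrtho_weyl hw) hγ.1 hγ.2
        have hdesc := R.ninv_descent (R.isOrtho_weyl hw) hj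
        have hws : w ∘ sRefl (R.simple j) ∈ R.weyl :=
          R.comp_mem_weyl hw (R.sRefl_mem_weyl (R.simple_root j))
        have hIH := ih _ hws (by omega)
        have := R.ascent hw j
        omega
  exact le_antisymm (hge (R.ninv w) w hw le_rfl) hle

end RootSystemData
namespace RootSystemData
open Finset
open scoped Classical

variable {V : Type*} [NormedAddCommGroup V] [InnerProductSpace ℝ V]
variable (R : RootSystemData V)

lemma inner_nonneg_of_coroot {x α : V} (hα : α ≠ 0) (h : 0 ≤ ⟪x, coroot α⟫) :
    0 ≤ ⟪x, α⟫ := by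
  rw [inner_coroot_eq'] at h
  have h2 : 0 < ⟪α, α⟫ := inner_self_pos' hα
  have h3 : 0 < 2 / ⟪α, α⟫ := by positivity
  nlinarith

lemma dominant_nonneg {x : V} (hx : R.IsDominant x) {γ : V} (hγ : γ ∈ R.pos) :
    0 ≤ ⟪x, coroot γ⟫ := by
  obtain ⟨c, hc⟩ := R.pos_combo γ hγ
  have hin : 0 ≤ ⟪x, γ⟫ := by
    rw [hc, inner_sum]
    apply Finset.sum_nonneg
    intro i _
    rw [real_inner_smul_right]
    exact mul_nonneg (by positivity)
      (inner_nonneg_of_coroot (R.root_ne_zero (R.simple_root i)) (hx i))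
  rw [inner_coroot_eq']
  have h2 : 0 < ⟪γ, γ⟫ := inner_self_pos' (R.root_ne_zero (R.pos_subset hγ))
  positivity

lemma exists_simple_inv {w : V → V} (hw : w ∈ R.weyl) (h : R.coxLen w ≠ 0) :
    ∃ j, w (R.simple j) ∈ -R.pos := by
  by_contra hcon
  push_neg at hcon
  have hs : ∀ γ ∈ R.pos, w γ ∈ R.pos := by
    intro γ hγ
    apply R.cone_pos (R.isOrtho_weyl hw) (fun i => ?_) hγ
    rcases R.root_cases ((R.isOrtho_weyl hw).2.2.2 _ (R.simple_root i)) with h' | h'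
    · exact h'
    · exact absurd h' (hcon i)
  have := R.eq_id_of_pos_stable hw hs
  subst this
  exact h R.coxLen_id

lemma pairing_zero_aux {w : V → V} {x : V} (hw : R.IsOrtho w) (hxd : R.IsDominant x)
    (hwxd : R.IsDominant (w x)) {j : Fin R.n} (hj : w (R.simple j) ∈ -R.pos) :
    ⟪x, coroot (R.simple j)⟫ = 0 := by
  have h1 : 0 ≤ ⟪x, coroot (R.simple j)⟫ := hxd j
  have h2 : ⟪x, coroot (R.simple j)⟫ = ⟪w x, coroot (w (R.simple j))⟫ :=
    (hw.inner_coroot_map R x (R.simple j)).symm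
  have h3 : coroot (w (R.simple j)) = - coroot (- w (R.simple j)) := by
    rw [coroot_neg, neg_neg]
  have h4 : 0 ≤ ⟪w x, coroot (- w (R.simple j))⟫ :=
    R.dominant_nonneg hwxd (R.mem_neg_pos.1 hj)
  rw [h3, inner_neg_right] at h2
  linarith

lemma sRefl_fix {x α : V} (h : ⟪x, coroot α⟫ = 0) : sRefl α x = x := by
  simp [sRefl, h]

lemma dominant_unique {w : V → V} {x : V} (hw : w ∈ R.weyl) (hx : R.IsDominant x)
    (hwx : R.IsDominant (w x)) : w x = x := by
  have key : ∀ N : ℕ, ∀ w ∈ R.weyl, R.coxLen w ≤ N → R.IsDominant (w x) → w x = x := by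
    intro N
    induction N with
    | zero =>
      intro w hw h0 _
      rw [R.eq_id_of_coxLen_zero hw (Nat.le_zero.1 h0)]
      rfl
    | succ N ih =>
      intro w hw hN hwx
      by_cases h0 : R.coxLen w = 0
      · rw [R.eq_id_of_coxLen_zero hw h0]; rfl
      · obtain ⟨j, hj⟩ := R.exists_simple_inv hw h0
        have hz := R.pairing_zero_aux (R.isOrtho_weyl hw) hx hwx hj
        have hfix : sRefl (R.simple j) x = x := sRefl_fix hz
        have hws : w ∘ sRefl (R.simple j) ∈ R.weyl :=
          R.comp_mem_weyl hw (R.sRefl_mem_weyl (R.simple_root j))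
        have hlen := R.descent hw hj
        have hx' : (w ∘ sRefl (R.simple j)) x = w x := by
          simp [Function.comp_apply, hfix]
        have hIH := ih _ hws (by omega) (by rw [hx']; exact hwx)
        rw [← hx', hIH]
  exact key (R.coxLen w) w hw le_rfl hwx

lemma stab_mem_weylI {w : V → V} {x : V} (hw : w ∈ R.weyl) (hx : R.IsDominant x)
    (hfix : w x = x) {I : Set (Fin R.n)}
    (hI : ∀ i, ⟪x, coroot (R.simple i)⟫ = 0 → i ∈ I) : w ∈ R.weylI I := by
  have key : ∀ N : ℕ, ∀ w ∈ R.weyl, R.coxLen w ≤ N → w x = x → w ∈ R.weylI I := by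
    intro N
    induction N with
    | zero =>
      intro w hw h0 _
      rw [R.eq_id_of_coxLen_zero hw (Nat.le_zero.1 h0)]
      exact ⟨[], by simp, rfl⟩
    | succ N ih =>
      intro w hw hN hfix
      by_cases h0 : R.coxLen w = 0
      · rw [R.eq_id_of_coxLen_zero hw h0]
        exact ⟨[], by simp, rfl⟩
      · obtain ⟨j, hj⟩ := R.exists_simple_inv hw h0
        have hz := R.pairing_zero_aux (R.isOrtho_weyl hw) hx (by rw [hfix]; exact hx) hj
        have hsfix : sRefl (R.simple j) x = x := sRefl_fix hz
        have hws : w ∘ sRefl (R.simple j) ∈ R.weyl :=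
          R.comp_mem_weyl hw (R.sRefl_mem_weyl (R.simple_root j))
        have hlen := R.descent hw hj
        have hx' : (w ∘ sRefl (R.simple j)) x = x := by
          simp [Function.comp_apply, hsfix, hfix]
        obtain ⟨l, hl, hwl⟩ := ih _ hws (by omega) hx'
        refine ⟨l ++ [j], ?_, ?_⟩
        · intro i hi
          rcases List.mem_append.1 hi with h | h
          · exact hl i h
          · rw [List.mem_singleton] at h
            subst h
            exact hI i hz
        · rw [wordProd_append, wordProd_singleton, ← hwl]
          funext y
          simp only [Function.comp_apply, sRefl_sRefl]
  exact key (R.coxLen w) w hw le_rfl hfix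

/-- Span of the simple roots indexed by `I`. -/
def spanI (I : Set (Fin R.n)) : Submodule ℝ V := Submodule.span ℝ (R.simple '' I)

lemma simple_mem_spanI {I : Set (Fin R.n)} {i : Fin R.n} (hi : i ∈ I) :
    R.simple i ∈ R.spanI I :=
  Submodule.subset_span ⟨i, hi, rfl⟩

lemma wordProd_inv (l : List (Fin R.n)) :
    (∀ x, R.wordProd l (R.wordProd l.reverse x) = x) ∧
    (∀ x, R.wordProd l.reverse (R.wordProd l x) = x) := by
  induction l with
  | nil => exact ⟨fun x => rfl, fun x => rfl⟩
  | cons a t ih =>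
    have hrev : (a :: t).reverse = t.reverse ++ [a] := by simp
    constructor
    · intro x
      rw [hrev, wordProd_cons, wordProd_append, wordProd_singleton]
      simp only [Function.comp_apply]
      rw [ih.1, sRefl_sRefl]
    · intro x
      rw [hrev, wordProd_cons, wordProd_append, wordProd_singleton]
      simp only [Function.comp_apply]
      rw [sRefl_sRefl, ih.2]

lemma weylI_inv {v : V → V} {I : Set (Fin R.n)} (hv : v ∈ R.weylI I) :
    ∃ v' ∈ R.weylI I, (∀ x, v (v' x) = x) ∧ (∀ x, v' (v x) = x) := by
  obtain ⟨l, hl, rfl⟩ := hv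
  exact ⟨R.wordProd l.reverse, ⟨l.reverse, fun i hi => hl i (List.mem_reverse.1 hi), rfl⟩,
    (R.wordProd_inv l).1, (R.wordProd_inv l).2⟩

lemma weylI_maps {v : V → V} {I : Set (Fin R.n)} (hv : v ∈ R.weylI I) :
    (∀ x ∈ R.spanI I, v x ∈ R.spanI I) ∧
    (∀ γ ∈ R.pos, γ ∉ R.spanI I → v γ ∈ R.pos ∧ v γ ∉ R.spanI I) := by
  obtain ⟨l, hl, rfl⟩ := hv
  induction l with
  | nil => exact ⟨fun x hx => hx, fun γ hγ hγs => ⟨hγ, hγs⟩⟩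
  | cons a t ih =>
    have ha : a ∈ I := hl a (by simp)
    obtain ⟨ih1, ih2⟩ := ih (fun i hi => hl i (by simp [hi]))
    have hsp : ∀ x ∈ R.spanI I, sRefl (R.simple a) x ∈ R.spanI I := by
      intro x hx
      show x - ⟪x, coroot (R.simple a)⟫ • R.simple a ∈ R.spanI I
      exact Submodule.sub_mem _ hx (Submodule.smul_mem _ _ (R.simple_mem_spanI ha))
    have hsp2 : ∀ γ ∈ R.pos, γ ∉ R.spanI I →
        sRefl (R.simple a) γ ∈ R.pos ∧ sRefl (R.simple a) γ ∉ R.spanI I := by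
      intro γ hγ hγs
      have hne : γ ≠ R.simple a := fun he => hγs (he ▸ R.simple_mem_spanI ha)
      refine ⟨R.sRefl_simple_mem_pos hγ a hne, fun hmem => hγs ?_⟩
      have := hsp _ hmem
      rwa [sRefl_sRefl] at this
    constructor
    · intro x hx
      rw [wordProd_cons, Function.comp_apply]
      exact hsp _ (ih1 x hx)
    · intro γ hγ hγs
      rw [wordProd_cons, Function.comp_apply]
      obtain ⟨h1, h2⟩ := ih2 γ hγ hγs
      exact hsp2 _ h1 h2

lemma repr_spanI {I : Set (Fin R.n)} {x : V} (hx : x ∈ R.spanI I) :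
    ∀ j ∉ I, R.bas.repr x j = 0 := by
  induction hx using Submodule.span_induction with
  | mem y hy =>
    obtain ⟨i, hi, rfl⟩ := hy
    intro j hj
    rw [R.repr_simple]
    have : i ≠ j := fun he => hj (he ▸ hi)
    simp [this]
  | zero => intro j _; simp
  | add y z _ _ ihy ihz => intro j hj; rw [map_add]; simp [ihy j hj, ihz j hj]
  | smul c y _ ihy => intro j hj; rw [map_smul]; simp [ihy j hj]

lemma pos_spanI_map {w : V → V} {I : Set (Fin R.n)} (hw : R.IsOrtho w)
    (hI : ∀ i ∈ I, w (R.simple i) ∈ R.pos) {γ : V} (hγ : γ ∈ R.pos)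
    (hγs : γ ∈ R.spanI I) : w γ ∈ R.pos := by
  have hexp : γ = ∑ j, R.bas.repr γ j • R.simple j := by
    conv_lhs => rw [← R.bas.sum_repr γ]
    congr 1
    funext j
    rw [R.bas_apply]
  have hwγ : w γ = ∑ j, R.bas.repr γ j • w (R.simple j) := by
    conv_lhs => rw [hexp]
    exact hw.map_sum R _ _ _
  apply R.root_mem_pos_of_repr_nonneg (hw.2.2.2 _ (R.pos_subset hγ))
  intro m
  rw [hwγ, R.repr_sum_smul]
  apply Finset.sum_nonneg
  intro j _
  by_cases hj : j ∈ I
  · exact mul_nonneg (R.pos_repr_nonneg hγ j) (R.pos_repr_nonneg (hI j hj) m)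
  · rw [R.repr_spanI hγs j hj, zero_mul]

lemma coset_min {w v : V → V} {I : Set (Fin R.n)} (hw : w ∈ R.weyl)
    (hI : ∀ i ∈ I, w (R.simple i) ∈ R.pos) (hv : v ∈ R.weylI I)
    (hlen : R.coxLen (w ∘ v) ≤ R.coxLen w) : v = id := by
  have hvW : v ∈ R.weyl := R.weylI_subset_weyl I hv
  have hwvW : w ∘ v ∈ R.weyl := R.comp_mem_weyl hw hvW
  obtain ⟨v', hv'I, hvv', hv'v⟩ := R.weylI_inv hv
  have hv'W : v' ∈ R.weyl := R.weylI_subset_weyl I hv'I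
  have hwo := R.isOrtho_weyl hw
  have hvo := R.isOrtho_weyl hvW
  -- every inversion of v lies in spanI
  have hS1span : ∀ γ ∈ R.invFinset v, γ ∈ R.spanI I := by
    intro γ hγ
    rw [R.mem_invFinset] at hγ
    by_contra hns
    have := (R.weylI_maps hv).2 γ hγ.1 hns
    exact R.not_pos_neg this.1 (R.mem_neg_pos.1 hγ.2)
  have hS1 : R.invFinset v ⊆ R.invFinset (w ∘ v) := by
    intro γ hγ
    have hspan := hS1span γ hγ
    rw [R.mem_invFinset] at hγ ⊢
    obtain ⟨hγp, hγn⟩ := hγ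
    refine ⟨hγp, ?_⟩
    have h1 : - v γ ∈ R.pos := R.mem_neg_pos.1 hγn
    have h2 : v γ ∈ R.spanI I := (R.weylI_maps hv).1 γ hspan
    have h3 : - v γ ∈ R.spanI I := Submodule.neg_mem _ h2
    have h4 : w (- v γ) ∈ R.pos := R.pos_spanI_map hwo hI h1 h3
    rw [Function.comp_apply]
    apply R.mem_neg_pos.2
    rw [show -(w (v γ)) = w (- v γ) from (hwo.map_neg R _).symm]
    exact h4
  have hS2 : ∀ β ∈ R.invFinset w, v' β ∈ R.invFinset (w ∘ v) ∧ v' β ∉ R.spanI I := by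
    intro β hβ
    rw [R.mem_invFinset] at hβ
    obtain ⟨hβp, hβn⟩ := hβ
    have hβns : β ∉ R.spanI I := by
      intro hmem
      exact R.not_pos_neg (R.pos_spanI_map hwo hI hβp hmem) (R.mem_neg_pos.1 hβn)
    have h5 := (R.weylI_maps hv'I).2 β hβp hβns
    refine ⟨?_, h5.2⟩
    rw [R.mem_invFinset]
    refine ⟨h5.1, ?_⟩
    rw [Function.comp_apply, hvv']
    exact hβn
  -- cardinality bookkeeping
  have hinj : Function.Injective v' := by
    intro a b hab
    rw [← hvv' a, ← hvv' b, hab]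
  have hcard2 : ((R.invFinset w).image v').card = R.ninv w :=
    Finset.card_image_of_injective _ hinj
  have hsub : R.invFinset v ∪ (R.invFinset w).image v' ⊆ R.invFinset (w ∘ v) := by
    intro γ hγ
    rcases Finset.mem_union.1 hγ with h | h
    · exact hS1 h
    · obtain ⟨β, hβ, rfl⟩ := Finset.mem_image.1 h
      exact (hS2 β hβ).1
  have hdisj : Disjoint (R.invFinset v) ((R.invFinset w).image v') := by
    rw [Finset.disjoint_left]
    intro γ hγ hγ2
    obtain ⟨β, hβ, rfl⟩ := Finset.mem_image.1 hγ2
    exact (hS2 β hβ).2 (hS1span _ hγ)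
  have hcards : R.ninv v + R.ninv w ≤ R.ninv (w ∘ v) := by
    have := Finset.card_le_card hsub
    rw [Finset.card_union_of_disjoint hdisj, hcard2] at this
    exact this
  have h6 : R.coxLen (w ∘ v) = R.ninv (w ∘ v) := R.coxLen_eq_ninv hwvW
  have h7 : R.coxLen w = R.ninv w := R.coxLen_eq_ninv hw
  have h8 : R.ninv v = 0 := by omega
  exact R.eq_id_of_ninv_zero hvW h8

end RootSystemData
section IntHelpers2

lemma le_neg_one_of_int_neg {x : ℝ} (h : ∃ m : ℤ, x = m) (h0 : x < 0) : x ≤ -1 := by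
  obtain ⟨m, rfl⟩ := h
  have : m < 0 := by exact_mod_cast h0
  have : m ≤ -1 := by omega
  exact_mod_cast this

end IntHelpers2

namespace RootSystemData
open Finset
open scoped Classical

variable {V : Type*} [NormedAddCommGroup V] [InnerProductSpace ℝ V]
variable (R : RootSystemData V)

lemma k_weyl {k : V → ℕ} (hk : R.IsWInvariant k) {w : V → V} (hw : w ∈ R.weyl)
    {β : V} (hβ : β ∈ R.roots) : k (w β) = k β := hk w hw β hβ

lemma k_neg {k : V → ℕ} (hk : R.IsWInvariant k) {β : V} (hβ : β ∈ R.roots) :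
    k (-β) = k β := by
  have h1 : sRefl β β = -β := sRefl_apply_self (R.root_ne_zero hβ)
  rw [← h1]
  exact hk (sRefl β) (R.sRefl_mem_weyl hβ) β hβ

end RootSystemData

section CorootRefl

variable {V : Type*} [NormedAddCommGroup V] [InnerProductSpace ℝ V]

lemma coroot_sRefl (α γ : V) :
    coroot (sRefl α γ) = coroot γ - ⟪α, coroot γ⟫ • coroot α := by
  have h1 : coroot (sRefl α γ) = sRefl α (coroot γ) := by
    rw [coroot, coroot, sRefl_inner, ← sRefl_smul]
  rw [h1, sRefl]
  congr 1
  rcases eq_or_ne α 0 with rfl | hα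
  · simp [coroot_zero]
  · show ⟪coroot γ, coroot α⟫ • α = ⟪α, coroot γ⟫ • ((2 / ⟪α, α⟫) • α)
    rw [smul_smul]
    congr 1
    rw [RootSystemData.inner_coroot_eq', real_inner_comm (coroot γ) α]
    ring

lemma inner_coroot_sRefl (x α γ : V) :
    ⟪x, coroot (sRefl α γ)⟫ = ⟪x, coroot γ⟫ - ⟪α, coroot γ⟫ * ⟪x, coroot α⟫ := by
  rw [coroot_sRefl, inner_sub_right, real_inner_smul_right]

end CorootRefl

namespace RootSystemData
open Finset
open scoped Classical

variable {V : Type*} [NormedAddCommGroup V] [InnerProductSpace ℝ V]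
variable (R : RootSystemData V)

/-- In the situation of the height induction step, the pairing
`⟪αᵢ, (sᵢγ)∨⟫` is a negative integer. -/
lemma step_pairing_neg {γ : V} (hγ : γ ∈ R.pos) (i : Fin R.n)
    (hm : 1 ≤ ⟪γ, coroot (R.simple i)⟫) (hmem : sRefl (R.simple i) γ ∈ R.pos) :
    ⟪R.simple i, coroot (sRefl (R.simple i) γ)⟫ ≤ -1 := by
  have hγr : γ ∈ R.roots := R.pos_subset hγ
  have hγ'r : sRefl (R.simple i) γ ∈ R.roots := R.pos_subset hmem
  have hαr := R.simple_root i
  have hα0 : R.simple i ≠ 0 := R.root_ne_zero hαr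
  have hγ'0 : sRefl (R.simple i) γ ≠ 0 := R.root_ne_zero hγ'r
  -- ⟪sᵢγ, coroot αᵢ⟫ = -⟪γ, coroot αᵢ⟫
  have h1 : ⟪sRefl (R.simple i) γ, coroot (R.simple i)⟫ = - ⟪γ, coroot (R.simple i)⟫ := by
    show ⟪γ - ⟪γ, coroot (R.simple i)⟫ • R.simple i, coroot (R.simple i)⟫ = _
    rw [inner_sub_left, real_inner_smul_left, inner_self_coroot hα0]
    ring
  have h2 : ⟪sRefl (R.simple i) γ, coroot (R.simple i)⟫ < 0 := by rw [h1]; linarith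
  have h3 : ⟪sRefl (R.simple i) γ, R.simple i⟫ < 0 := by
    by_contra hcon
    push_neg at hcon
    have := inner_coroot_eq' (sRefl (R.simple i) γ) (R.simple i)
    have hq : 0 < ⟪R.simple i, R.simple i⟫ := inner_self_pos' hα0
    have hpos : 0 < 2 / ⟪R.simple i, R.simple i⟫ := by positivity
    nlinarith
  have h4 : ⟪R.simple i, coroot (sRefl (R.simple i) γ)⟫ < 0 := by
    rw [inner_coroot_eq']
    have hq : 0 < ⟪sRefl (R.simple i) γ, sRefl (R.simple i) γ⟫ := inner_self_pos' hγ'0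
    have hsym : ⟪R.simple i, sRefl (R.simple i) γ⟫ < 0 := by
      rw [real_inner_comm]; exact h3
    have : 0 < 2 / ⟪sRefl (R.simple i) γ, sRefl (R.simple i) γ⟫ := by positivity
    nlinarith
  exact le_neg_one_of_int_neg (R.pairing_int hγ'r hαr) h4

section Rho

variable (fw : Fin R.n → V) (k : V → ℕ)

/-- `ρ_𝐤`. -/
def rhoK : V := ∑ i, (k (R.simple i) : ℝ) • fw i

lemma rhoK_pairing (hfw : ∀ i j, ⟪fw i, coroot (R.simple j)⟫ = if i = j then (1:ℝ) else 0)
    (j : Fin R.n) : ⟪R.rhoK fw k, coroot (R.simple j)⟫ = k (R.simple j) := by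
  unfold rhoK
  rw [sum_inner]
  rw [Finset.sum_eq_single j]
  · rw [real_inner_smul_left, hfw j j]
    simp
  · intro i _ hij
    rw [real_inner_smul_left, hfw i j]
    simp [hij]
  · simp

lemma rhoK_dominant (hfw : ∀ i j, ⟪fw i, coroot (R.simple j)⟫ = if i = j then (1:ℝ) else 0) :
    R.IsDominant (R.rhoK fw k) := by
  intro i
  rw [R.rhoK_pairing fw k hfw i]
  positivity

lemma rhoK_pairing_ge (hfw : ∀ i j, ⟪fw i, coroot (R.simple j)⟫ = if i = j then (1:ℝ) else 0)
    (hk : R.IsWInvariant k) {γ : V} (hγ : γ ∈ R.pos) :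
    (k γ : ℝ) ≤ ⟪R.rhoK fw k, coroot γ⟫ := by
  refine R.pos_induction (fun γ => (k γ : ℝ) ≤ ⟪R.rhoK fw k, coroot γ⟫) ?_ ?_ γ hγ
  · intro i
    rw [R.rhoK_pairing fw k hfw i]
  · intro γ hγ i hm hne hmem hQ
    have hγr : γ ∈ R.roots := R.pos_subset hγ
    have ht := R.step_pairing_neg hγ i hm hmem
    have hkeq : k (sRefl (R.simple i) γ) = k γ :=
      R.k_weyl hk (R.sRefl_mem_weyl (R.simple_root i)) hγr
    have hident : ⟪R.rhoK fw k, coroot γ⟫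
        = ⟪R.rhoK fw k, coroot (sRefl (R.simple i) γ)⟫
          - ⟪R.simple i, coroot (sRefl (R.simple i) γ)⟫
            * ⟪R.rhoK fw k, coroot (R.simple i)⟫ := by
      conv_lhs => rw [show γ = sRefl (R.simple i) (sRefl (R.simple i) γ) from
        (sRefl_sRefl _ _).symm]
      rw [inner_coroot_sRefl]
    rw [hident, R.rhoK_pairing fw k hfw i, ← hkeq]
    have hknn : (0:ℝ) ≤ (k (R.simple i) : ℝ) := by positivity
    nlinarith

end Rho

lemma weightLattice_weyl {x : V} (hx : x ∈ R.weightLattice) {w : V → V} (hw : w ∈ R.weyl) :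
    w x ∈ R.weightLattice := by
  intro β hβ
  obtain ⟨w', hw'W, hww', hw'w⟩ := R.weyl_inv hw
  have hwo := R.isOrtho_weyl hw
  have hβ' : w' β ∈ R.roots := (R.isOrtho_weyl hw'W).2.2.2 β hβ
  obtain ⟨m, hm⟩ := hx (w' β) hβ'
  refine ⟨m, ?_⟩
  rw [← hm, ← hwo.inner_coroot_map R x (w' β), hww']

lemma weightLattice_sub {x y : V} (hx : x ∈ R.weightLattice) (hy : y ∈ R.weightLattice) :
    x - y ∈ R.weightLattice := by
  intro β hβ
  obtain ⟨m, hm⟩ := hx β hβ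
  obtain ⟨m', hm'⟩ := hy β hβ
  exact ⟨m - m', by rw [inner_sub_left, hm, hm']; push_cast; ring⟩

lemma weightLattice_add {x y : V} (hx : x ∈ R.weightLattice) (hy : y ∈ R.weightLattice) :
    x + y ∈ R.weightLattice := by
  intro β hβ
  obtain ⟨m, hm⟩ := hx β hβ
  obtain ⟨m', hm'⟩ := hy β hβ
  exact ⟨m + m', by rw [inner_add_left, hm, hm']; push_cast; ring⟩

lemma coroot_int_combo {β : V} (hβ : β ∈ R.roots) :
    ∃ f : Fin R.n → ℤ, coroot β = ∑ i, (f i : ℝ) • coroot (R.simple i) := by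
  have hpos : ∀ γ ∈ R.pos, ∃ f : Fin R.n → ℤ,
      coroot γ = ∑ i, (f i : ℝ) • coroot (R.simple i) := by
    refine R.pos_induction _ ?_ ?_
    · intro i
      refine ⟨fun j => if j = i then 1 else 0, ?_⟩
      rw [Finset.sum_eq_single i]
      · simp
      · intro j _ hj; simp [hj]
      · simp
    · intro γ hγ i hm hne hmem ih
      obtain ⟨f, hf⟩ := ih
      have hγ'r : sRefl (R.simple i) γ ∈ R.roots := R.pos_subset hmem
      obtain ⟨t, htint⟩ := R.pairing_int hγ'r (R.simple_root i)
      refine ⟨fun j => f j - (if j = i then t else 0), ?_⟩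
      have hγeq : γ = sRefl (R.simple i) (sRefl (R.simple i) γ) := (sRefl_sRefl _ _).symm
      conv_lhs => rw [hγeq]
      rw [coroot_sRefl, htint, hf]
      rw [show ∑ j, ((f j - if j = i then t else 0 : ℤ) : ℝ) • coroot (R.simple j)
          = ∑ j, ((f j : ℝ) • coroot (R.simple j)
            - (if j = i then (t:ℝ) else 0) • coroot (R.simple j)) from by
        apply Finset.sum_congr rfl
        intro j _
        push_cast
        rw [sub_smul]]
      rw [Finset.sum_sub_distrib]
      congr 1
      rw [Finset.sum_eq_single i]
      · simp
      · intro j _ hj; simp [hj]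
      · simp
  rcases R.root_cases hβ with h | h
  · exact hpos β h
  · obtain ⟨f, hf⟩ := hpos _ h
    refine ⟨fun j => - f j, ?_⟩
    have : coroot β = - coroot (-β) := by rw [coroot_neg, neg_neg]
    rw [this, hf, ← Finset.sum_neg_distrib]
    apply Finset.sum_congr rfl
    intro j _
    push_cast
    rw [neg_smul]

lemma mem_weightLattice_of_simple {x : V}
    (h : ∀ i, ∃ m : ℤ, ⟪x, coroot (R.simple i)⟫ = m) : x ∈ R.weightLattice := by
  intro β hβ
  obtain ⟨f, hf⟩ := R.coroot_int_combo hβ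
  choose m hm using h
  refine ⟨∑ i, f i * m i, ?_⟩
  rw [hf, inner_sum]
  push_cast
  apply Finset.sum_congr rfl
  intro i _
  rw [real_inner_smul_right, hm i]

lemma rhoK_mem_weightLattice (fw : Fin R.n → V) (k : V → ℕ)
    (hfw : ∀ i j, ⟪fw i, coroot (R.simple j)⟫ = if i = j then (1:ℝ) else 0) :
    R.rhoK fw k ∈ R.weightLattice := by
  apply R.mem_weightLattice_of_simple
  intro i
  exact ⟨k (R.simple i), by rw [R.rhoK_pairing fw k hfw i]; push_cast; ring⟩

end RootSystemData
namespace RootSystemData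
open Finset
open scoped Classical

variable {V : Type*} [NormedAddCommGroup V] [InnerProductSpace ℝ V]
variable (R : RootSystemData V)

lemma mem_spanI_of_repr {I : Set (Fin R.n)} {γ : V}
    (h : ∀ j ∉ I, R.bas.repr γ j = 0) : γ ∈ R.spanI I := by
  have hexp : γ = ∑ j, R.bas.repr γ j • R.simple j := by
    conv_lhs => rw [← R.bas.sum_repr γ]
    congr 1
    funext j
    rw [R.bas_apply]
  rw [hexp]
  apply Submodule.sum_mem
  intro j _
  by_cases hj : j ∈ I
  · exact Submodule.smul_mem _ _ (R.simple_mem_spanI hj)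
  · rw [h j hj, zero_smul]
    exact Submodule.zero_mem _

lemma pos_pairing_zero_spanI {x γ : V} (hx : R.IsDominant x) (hγ : γ ∈ R.pos)
    (h : ⟪x, coroot γ⟫ = 0) : γ ∈ R.spanI {i | ⟪x, coroot (R.simple i)⟫ = 0} := by
  have hγ0 : γ ≠ 0 := R.root_ne_zero (R.pos_subset hγ)
  have hq : 0 < ⟪γ, γ⟫ := inner_self_pos' hγ0
  have hxγ : ⟪x, γ⟫ = 0 := by
    rw [inner_coroot_eq'] at h
    have h2 : 2 / ⟪γ, γ⟫ ≠ 0 := by positivity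
    exact (mul_eq_zero.1 h).resolve_left h2
  have hexp : γ = ∑ j, R.bas.repr γ j • R.simple j := by
    conv_lhs => rw [← R.bas.sum_repr γ]
    congr 1
    funext j
    rw [R.bas_apply]
  have hsum : ∑ j, R.bas.repr γ j * ⟪x, R.simple j⟫ = 0 := by
    rw [← hxγ]
    conv_rhs => rw [hexp]
    rw [inner_sum]
    apply Finset.sum_congr rfl
    intro j _
    rw [real_inner_smul_right]
  have hterm : ∀ j ∈ Finset.univ, 0 ≤ R.bas.repr γ j * ⟪x, R.simple j⟫ := by
    intro j _
    exact mul_nonneg (R.pos_repr_nonneg hγ j)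
      (inner_nonneg_of_coroot (R.root_ne_zero (R.simple_root j)) (hx j))
  apply R.mem_spanI_of_repr
  intro j hj
  have hzero := (Finset.sum_eq_zero_iff_of_nonneg hterm).1 hsum j (by simp)
  have hne : ⟪x, coroot (R.simple j)⟫ ≠ 0 := hj
  have hpos : 0 < ⟪x, R.simple j⟫ := by
    have h1 : 0 ≤ ⟪x, R.simple j⟫ :=
      inner_nonneg_of_coroot (R.root_ne_zero (R.simple_root j)) (hx j)
    rcases lt_or_eq_of_le h1 with h2 | h2
    · exact h2
    · exfalso
      apply hne
      rw [inner_coroot_eq', ← h2, mul_zero]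
  rcases mul_eq_zero.1 hzero with h3 | h3
  · exact h3
  · exact absurd h3 (ne_of_gt hpos)

end RootSystemData
/-- The sinks of symmetric interval-firing are exactly the `η_𝐤(λ)` for weights
`λ` with `⟨λ,α∨⟩ ≠ −1` for all positive roots `α`. -/
theorem statement5 (R : RootSystemData V)
    (fw : Fin R.n → V)
    (hfw : ∀ i j, ⟪fw i, coroot (R.simple j)⟫ = if i = j then (1 : ℝ) else 0)
    (dm : V → V)
    (hdm : ∀ lam ∈ R.weightLattice, dm lam ∈ R.orbit lam ∧ R.IsDominant (dm lam))
    (wl : V → V → V)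
    (hwl : ∀ lam ∈ R.weightLattice, wl lam ∈ R.weyl ∧ wl lam (dm lam) = lam ∧
      ∀ w ∈ R.weyl, w (dm lam) = lam → R.coxLen (wl lam) ≤ R.coxLen w)
    (k : V → ℕ) (hk : R.IsWInvariant k) (mu : V) (hmu : mu ∈ R.weightLattice) :
    (¬ ∃ ν, R.symFire k mu ν) ↔
      ∃ lam ∈ R.weightLattice, (∀ α ∈ R.pos, ⟪lam, coroot α⟫ ≠ -1) ∧
        mu = etaMap R fw wl k lam := by
  have hρP := R.rhoK_mem_weightLattice fw k hfw
  constructor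
  · -- forward: sink → ∃ lam
    intro hsinkEx
    obtain ⟨hδorb, hδdom⟩ := hdm mu hmu
    obtain ⟨hwW, hwfix, hwmin⟩ := hwl mu hmu
    have hsink : ∀ α ∈ R.pos,
        ¬(-(k α : ℝ) ≤ ⟪mu, coroot α⟫ + 1 ∧ ⟪mu, coroot α⟫ + 1 ≤ (k α : ℝ)) := by
      intro α hα hb
      exact hsinkEx ⟨mu + α, hmu, α, hα, rfl, hb.1, hb.2⟩
    have hwo := R.isOrtho_weyl hwW
    have hδP : dm mu ∈ R.weightLattice := by
      obtain ⟨u, huW, hu⟩ := hδorb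
      rw [hu]; exact R.weightLattice_weyl hmu huW
    have hpair : ∀ y : V, ⟪mu, coroot (wl mu y)⟫ = ⟪dm mu, coroot y⟫ := by
      intro y
      have h := hwo.inner_coroot_map R (dm mu) y
      rw [hwfix] at h
      exact h
    -- minimality consequence
    have hmin0 : ∀ i : Fin R.n, wl mu (R.simple i) ∈ -R.pos →
        ⟪dm mu, coroot (R.simple i)⟫ ≠ 0 := by
      intro i hneg h0
      have hws : wl mu ∘ sRefl (R.simple i) ∈ R.weyl :=
        R.comp_mem_weyl hwW (R.sRefl_mem_weyl (R.simple_root i))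
      have hfix2 : (wl mu ∘ sRefl (R.simple i)) (dm mu) = mu := by
        simp only [Function.comp_apply]
        rw [RootSystemData.sRefl_fix h0, hwfix]
      have h1 := hwmin _ hws hfix2
      have h2 := R.descent hwW hneg
      omega
    have hstep1a : ∀ i : Fin R.n, wl mu (R.simple i) ∈ R.pos →
        (k (R.simple i) : ℝ) ≤ ⟪dm mu, coroot (R.simple i)⟫ := by
      intro i hp
      obtain ⟨m, hm⟩ := hδP _ (R.simple_root i)
      have hm0 : 0 ≤ ⟪dm mu, coroot (R.simple i)⟫ := hδdom i
      by_contra hlt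
      push_neg at hlt
      apply hsink _ hp
      have hkk : k (wl mu (R.simple i)) = k (R.simple i) :=
        R.k_weyl hk hwW (R.simple_root i)
      rw [hpair (R.simple i), hkk]
      constructor
      · have : (0:ℝ) ≤ (k (R.simple i) : ℝ) := by positivity
        linarith
      · rw [hm] at hlt hm0 ⊢
        have h1 : m < (k (R.simple i) : ℤ) := by exact_mod_cast hlt
        have h2 : m + 1 ≤ (k (R.simple i) : ℤ) := by omega
        exact_mod_cast h2
    have hstep1b : ∀ i : Fin R.n, wl mu (R.simple i) ∈ -R.pos →
        (k (R.simple i) : ℝ) + 2 ≤ ⟪dm mu, coroot (R.simple i)⟫ := by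
      intro i hneg
      obtain ⟨m, hm⟩ := hδP _ (R.simple_root i)
      have hm0 : 0 ≤ ⟪dm mu, coroot (R.simple i)⟫ := hδdom i
      have hmne := hmin0 i hneg
      have hwr : wl mu (R.simple i) ∈ R.roots := hwo.2.2.2 _ (R.simple_root i)
      have hαpos : - wl mu (R.simple i) ∈ R.pos := R.mem_neg_pos.1 hneg
      have hcor : ⟪mu, coroot (- wl mu (R.simple i))⟫ = - ⟪dm mu, coroot (R.simple i)⟫ := by
        rw [coroot_neg, inner_neg_right, hpair]
      have hkk : k (- wl mu (R.simple i)) = k (R.simple i) := by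
        rw [R.k_neg hk hwr, R.k_weyl hk hwW (R.simple_root i)]
      by_contra hlt
      push_neg at hlt
      apply hsink _ hαpos
      rw [hcor, hkk]
      rw [hm] at hlt hm0 hmne ⊢
      have h1 : m < (k (R.simple i) : ℤ) + 2 := by exact_mod_cast hlt
      have h2 : (0:ℤ) ≤ m := by exact_mod_cast hm0
      have h3 : m ≠ 0 := by exact_mod_cast hmne
      constructor
      · have h4 : -((k (R.simple i) : ℤ)) ≤ -m + 1 := by omega
        exact_mod_cast h4
      · have h5 : -m + 1 ≤ (k (R.simple i) : ℤ) := by omega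
        exact_mod_cast h5
    have hstep1 : ∀ i : Fin R.n, (k (R.simple i) : ℝ) ≤ ⟪dm mu, coroot (R.simple i)⟫ := by
      intro i
      rcases R.root_cases (hwo.2.2.2 _ (R.simple_root i)) with h | h
      · exact hstep1a i h
      · have := hstep1b i ((R.mem_neg_pos).2 (R.mem_neg_pos.1 h))
        linarith
    have hδ'dom : R.IsDominant (dm mu - R.rhoK fw k) := by
      intro i
      rw [inner_sub_left, R.rhoK_pairing fw k hfw i]
      have := hstep1 i
      linarith
    have hIpos : ∀ i : Fin R.n, ⟪dm mu - R.rhoK fw k, coroot (R.simple i)⟫ = 0 →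
        wl mu (R.simple i) ∈ R.pos := by
      intro i h0
      rw [inner_sub_left, R.rhoK_pairing fw k hfw i] at h0
      rcases R.root_cases (hwo.2.2.2 _ (R.simple_root i)) with h | h
      · exact h
      · exfalso
        have := hstep1b i ((R.mem_neg_pos).2 (R.mem_neg_pos.1 h))
        linarith
    -- Lemma A
    have hA : ∀ γ ∈ R.pos, wl mu γ ∈ -R.pos →
        2 ≤ ⟪dm mu - R.rhoK fw k, coroot γ⟫ := by
      refine R.pos_induction
        (fun γ => wl mu γ ∈ -R.pos → 2 ≤ ⟪dm mu - R.rhoK fw k, coroot γ⟫) ?_ ?_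
      · intro i hneg
        have := hstep1b i hneg
        rw [inner_sub_left, R.rhoK_pairing fw k hfw i]
        linarith
      · intro γ hγ i hm hne hmem ihQ hneg
        have hγr := R.pos_subset hγ
        have hγ''r := R.pos_subset hmem
        have ht := R.step_pairing_neg hγ i hm hmem
        have hB : 0 ≤ ⟪dm mu - R.rhoK fw k, coroot (R.simple i)⟫ := hδ'dom i
        have hA0 : 0 ≤ ⟪dm mu - R.rhoK fw k, coroot (sRefl (R.simple i) γ)⟫ :=
          R.dominant_nonneg hδ'dom hmem
        have hident : ⟪dm mu - R.rhoK fw k, coroot γ⟫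
            = ⟪dm mu - R.rhoK fw k, coroot (sRefl (R.simple i) γ)⟫
              - ⟪R.simple i, coroot (sRefl (R.simple i) γ)⟫
                * ⟪dm mu - R.rhoK fw k, coroot (R.simple i)⟫ := by
          conv_lhs => rw [show γ = sRefl (R.simple i) (sRefl (R.simple i) γ) from
            (sRefl_sRefl _ _).symm]
          rw [inner_coroot_sRefl]
        rcases R.root_cases (hwo.2.2.2 _ hγ''r) with hcase | hcase
        · -- w(sᵢγ) positive ⟹ w(αᵢ) negative
          have hγeq : γ = sRefl (R.simple i) γ + ⟪γ, coroot (R.simple i)⟫ • R.simple i := by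
            show γ = γ - ⟪γ, coroot (R.simple i)⟫ • R.simple i
              + ⟪γ, coroot (R.simple i)⟫ • R.simple i
            abel
          have hwγeq : wl mu γ = wl mu (sRefl (R.simple i) γ)
              + ⟪γ, coroot (R.simple i)⟫ • wl mu (R.simple i) := by
            conv_lhs => rw [hγeq]
            rw [hwo.1, hwo.2.1]
          have hwneg : wl mu (R.simple i) ∈ -R.pos := by
            apply R.neg_of_pos_add hcase (hwo.2.2.2 _ (R.simple_root i))
              (show (0:ℝ) < ⟪γ, coroot (R.simple i)⟫ by linarith)
            rw [← hwγeq]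
            exact hneg
          have h2 := hstep1b i hwneg
          have h2' : 2 ≤ ⟪dm mu - R.rhoK fw k, coroot (R.simple i)⟫ := by
            rw [inner_sub_left, R.rhoK_pairing fw k hfw i]
            linarith
          rw [hident]
          nlinarith
        · have h2 := ihQ ((R.mem_neg_pos).2 (R.mem_neg_pos.1 hcase))
          rw [hident]
          nlinarith
    -- construct lam
    have hδ'P : dm mu - R.rhoK fw k ∈ R.weightLattice := R.weightLattice_sub hδP hρP
    have hlamP : wl mu (dm mu - R.rhoK fw k) ∈ R.weightLattice :=
      R.weightLattice_weyl hδ'P hwW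
    obtain ⟨w', hw'W, hww', hw'w⟩ := R.weyl_inv hwW
    refine ⟨wl mu (dm mu - R.rhoK fw k), hlamP, ?_, ?_⟩
    · -- no pairing equals -1
      intro α hα
      have hβr : w' α ∈ R.roots := (R.isOrtho_weyl hw'W).2.2.2 _ (R.pos_subset hα)
      have hpairlam : ⟪wl mu (dm mu - R.rhoK fw k), coroot α⟫
          = ⟪dm mu - R.rhoK fw k, coroot (w' α)⟫ := by
        conv_lhs => rw [show α = wl mu (w' α) from (hww' α).symm]
        exact hwo.inner_coroot_map R _ _
      rw [hpairlam]
      rcases R.root_cases hβr with hc | hc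
      · have h0 := R.dominant_nonneg hδ'dom hc
        intro he
        rw [he] at h0
        linarith
      · have hγp : -(w' α) ∈ R.pos := hc
        have hwγ : wl mu (-(w' α)) ∈ -R.pos := by
          rw [hwo.map_neg R, hww']
          exact R.mem_neg_pos.2 (by rw [neg_neg]; exact hα)
        have h2 := hA _ hγp hwγ
        have h3 : ⟪dm mu - R.rhoK fw k, coroot (-(w' α))⟫
            = - ⟪dm mu - R.rhoK fw k, coroot (w' α)⟫ := by
          rw [coroot_neg, inner_neg_right]
        intro he
        rw [h3, he] at h2
        linarith
    · -- mu = etaMap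
      obtain ⟨hdmo2, hdm2dom⟩ := hdm _ hlamP
      obtain ⟨hW2, hfix2, hmin2⟩ := hwl _ hlamP
      have hdmlam : dm (wl mu (dm mu - R.rhoK fw k)) = dm mu - R.rhoK fw k := by
        obtain ⟨u, huW, hu⟩ := hdmo2
        have huw : u ∘ wl mu ∈ R.weyl := R.comp_mem_weyl huW hwW
        have hkey : (u ∘ wl mu) (dm mu - R.rhoK fw k) = dm mu - R.rhoK fw k := by
          apply R.dominant_unique huw hδ'dom
          show R.IsDominant ((u ∘ wl mu) (dm mu - R.rhoK fw k))
          have : (u ∘ wl mu) (dm mu - R.rhoK fw k)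
              = dm (wl mu (dm mu - R.rhoK fw k)) := by
            rw [Function.comp_apply, ← hu]
          rw [this]
          exact hdm2dom
        rw [hu]
        exact hkey
      have hvW : w' ∘ wl (wl mu (dm mu - R.rhoK fw k)) ∈ R.weyl :=
        R.comp_mem_weyl hw'W hW2
      have hfix2' : wl (wl mu (dm mu - R.rhoK fw k)) (dm mu - R.rhoK fw k)
          = wl mu (dm mu - R.rhoK fw k) := by
        have h := hfix2
        rw [hdmlam] at h
        exact h
      have hvfix : (w' ∘ wl (wl mu (dm mu - R.rhoK fw k))) (dm mu - R.rhoK fw k)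
          = dm mu - R.rhoK fw k := by
        rw [Function.comp_apply, hfix2']
        exact hw'w _
      have hvI : w' ∘ wl (wl mu (dm mu - R.rhoK fw k))
          ∈ R.weylI {i | ⟪dm mu - R.rhoK fw k, coroot (R.simple i)⟫ = 0} :=
        R.stab_mem_weylI hvW hδ'dom hvfix (fun i h => h)
      have hIw : ∀ i ∈ {i | ⟪dm mu - R.rhoK fw k, coroot (R.simple i)⟫ = 0},
          wl mu (R.simple i) ∈ R.pos := fun i h => hIpos i h
      have he : wl mu ∘ (w' ∘ wl (wl mu (dm mu - R.rhoK fw k)))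
          = wl (wl mu (dm mu - R.rhoK fw k)) := by
        funext x
        simp only [Function.comp_apply]
        rw [hww']
      have hcox : R.coxLen (wl mu ∘ (w' ∘ wl (wl mu (dm mu - R.rhoK fw k))))
          ≤ R.coxLen (wl mu) := by
        rw [he]
        exact hmin2 (wl mu) hwW (by rw [hdmlam])
      have hveq := R.coset_min hwW hIw hvI hcox
      have hwleq : wl (wl mu (dm mu - R.rhoK fw k)) = wl mu := by
        rw [← he, hveq]
        rfl
      show mu = wl mu (dm mu - R.rhoK fw k)
        + wl (wl mu (dm mu - R.rhoK fw k)) (R.rhoK fw k)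
      rw [hwleq]
      have hsum : wl mu (dm mu - R.rhoK fw k) + wl mu (R.rhoK fw k)
          = wl mu (dm mu) := by
        rw [← hwo.1]
        congr 1
        abel
      rw [hsum, hwfix]
  · -- backward: eta of good lam is a sink
    rintro ⟨lam, hlamP, hneg1, hmueq⟩
    obtain ⟨hδorb, hδdom⟩ := hdm lam hlamP
    obtain ⟨hwW, hwfix, hwmin⟩ := hwl lam hlamP
    have hwo := R.isOrtho_weyl hwW
    have hδP : dm lam ∈ R.weightLattice := by
      obtain ⟨u, huW, hu⟩ := hδorb
      rw [hu]; exact R.weightLattice_weyl hlamP huW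
    obtain ⟨w', hw'W, hww', hw'w⟩ := R.weyl_inv hwW
    have hμw : mu = wl lam (dm lam + R.rhoK fw k) := by
      rw [hmueq]
      show lam + wl lam (R.rhoK fw k) = _
      rw [hwo.1, hwfix]
    -- minimality: simple roots orthogonal to dm lam stay positive
    have hminI : ∀ i : Fin R.n, ⟪dm lam, coroot (R.simple i)⟫ = 0 →
        wl lam (R.simple i) ∈ R.pos := by
      intro i h0
      rcases R.root_cases (hwo.2.2.2 _ (R.simple_root i)) with h | h
      · exact h
      · exfalso
        have hneg : wl lam (R.simple i) ∈ -R.pos :=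
          (R.mem_neg_pos).2 (R.mem_neg_pos.1 h)
        have hws : wl lam ∘ sRefl (R.simple i) ∈ R.weyl :=
          R.comp_mem_weyl hwW (R.sRefl_mem_weyl (R.simple_root i))
        have hfix2 : (wl lam ∘ sRefl (R.simple i)) (dm lam) = lam := by
          simp only [Function.comp_apply]
          rw [RootSystemData.sRefl_fix h0, hwfix]
        have h1 := hwmin _ hws hfix2
        have h2 := R.descent hwW hneg
        omega
    rintro ⟨ν, hνP, α, hα, hνeq, hlow, hhigh⟩
    have hβr : w' α ∈ R.roots := (R.isOrtho_weyl hw'W).2.2.2 _ (R.pos_subset hα)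
    have hμpair : ⟪mu, coroot α⟫ = ⟪dm lam + R.rhoK fw k, coroot (w' α)⟫ := by
      rw [hμw]
      conv_lhs => rw [show α = wl lam (w' α) from (hww' α).symm]
      exact hwo.inner_coroot_map R _ _
    have hkα : k α = k (w' α) := by
      conv_lhs => rw [show α = wl lam (w' α) from (hww' α).symm]
      exact R.k_weyl hk hwW hβr
    rcases R.root_cases hβr with hc | hc
    · -- w' α positive
      have h1 : 0 ≤ ⟪dm lam, coroot (w' α)⟫ := R.dominant_nonneg hδdom hc
      have h2 : (k (w' α) : ℝ) ≤ ⟪R.rhoK fw k, coroot (w' α)⟫ :=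
        R.rhoK_pairing_ge fw k hfw hk hc
      rw [hμpair, inner_add_left] at hhigh
      rw [hkα] at hhigh
      linarith
    · -- w' α negative
      have hγp : -(w' α) ∈ R.pos := hc
      have hγr : -(w' α) ∈ R.roots := R.pos_subset hγp
      have hwγ : wl lam (-(w' α)) ∈ -R.pos := by
        rw [hwo.map_neg R, hww']
        exact R.mem_neg_pos.2 (by rw [neg_neg]; exact hα)
      -- ⟪dm lam, coroot (-(w' α))⟫ ≥ 2
      obtain ⟨m, hm⟩ := hδP _ hγr
      have hm0 : 0 ≤ ⟪dm lam, coroot (-(w' α))⟫ := R.dominant_nonneg hδdom hγp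
      have hmne0 : ⟪dm lam, coroot (-(w' α))⟫ ≠ 0 := by
        intro h0
        have hspan := R.pos_pairing_zero_spanI hδdom hγp h0
        have := R.pos_spanI_map hwo
          (fun i hi => hminI i hi) hγp hspan
        exact R.not_pos_neg this (R.mem_neg_pos.1 hwγ)
      have hmne1 : ⟪dm lam, coroot (-(w' α))⟫ ≠ 1 := by
        intro h1
        apply hneg1 α hα
        have : ⟪lam, coroot α⟫ = ⟪dm lam, coroot (w' α)⟫ := by
          conv_lhs => rw [← hwfix, show α = wl lam (w' α) from (hww' α).symm]
          exact hwo.inner_coroot_map R _ _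
        rw [this]
        have h2 : ⟪dm lam, coroot (w' α)⟫ = - ⟪dm lam, coroot (-(w' α))⟫ := by
          rw [coroot_neg, inner_neg_right, neg_neg]
        rw [h2, h1]
      have h2 : 2 ≤ ⟪dm lam, coroot (-(w' α))⟫ :=
        two_le_of_int ⟨m, hm⟩ hm0 hmne0 hmne1
      have h3 : (k (-(w' α)) : ℝ) ≤ ⟪R.rhoK fw k, coroot (-(w' α))⟫ :=
        R.rhoK_pairing_ge fw k hfw hk hγp
      have hkeq : k (-(w' α)) = k (w' α) := R.k_neg hk hβr
      have h4 : ⟪mu, coroot α⟫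
          = -(⟪dm lam, coroot (-(w' α))⟫ + ⟪R.rhoK fw k, coroot (-(w' α))⟫) := by
        rw [hμpair, coroot_neg, inner_neg_right, inner_neg_right, inner_add_left]
        ring
      rw [hkα, ← hkeq] at hlow
      rw [h4] at hlow
      linarith
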